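/- arXiv:math/9911016 — 11 statements merged into one kernel-verified Lean document; each statement's English description precedes it below -/
import Mathlib

section
/- The canonical norm of c₀(ℕ) is metric weak-star Kadec-Klee: for every x* in ℓ¹(ℕ) (the dual of c₀) and every sequence (xₙ*) in ℓ¹ converging to 0 in the weak-star topology, one has limsup ‖x* + xₙ*‖ ≥ ‖x*‖ + limsup ‖xₙ*‖. -/
open Filter Topology NormedSpace
open scoped ZeroAtInfty

noncomputable section Aux

/-- indicator-type element of c₀ -/
def indic (F : Finset ℕ) (c : ℕ → ℝ) : C₀(ℕ, ℝ) :=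
  ⟨⟨fun j => if j ∈ F then c j else 0, continuous_of_discreteTopology⟩, by
    rw [cocompact_eq_cofinite]
    apply tendsto_nhds_of_eventually_eq
    filter_upwards [F.finite_toSet.compl_mem_cofinite] with j hj
    have : j ∉ F := by simpa using hj
    simp [this]⟩

@[simp] lemma indic_apply (F : Finset ℕ) (c : ℕ → ℝ) (j : ℕ) :
    indic F c j = if j ∈ F then c j else 0 := rfl

lemma c0_norm_le (f : C₀(ℕ, ℝ)) {C : ℝ} (hC : 0 ≤ C) (h : ∀ j, |f j| ≤ C) : ‖f‖ ≤ C := by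
  rw [← ZeroAtInftyContinuousMap.norm_toBCF_eq_norm]
  exact (BoundedContinuousFunction.norm_le hC).2 h

lemma c0_apply_le (f : C₀(ℕ, ℝ)) (j : ℕ) : |f j| ≤ ‖f‖ := by
  rw [← ZeroAtInftyContinuousMap.norm_toBCF_eq_norm]
  exact f.toBCF.norm_coe_le_norm j

/-- e i -/
def eb (i : ℕ) : C₀(ℕ, ℝ) := indic {i} (fun _ => 1)

lemma indic_eq_sum (F : Finset ℕ) (c : ℕ → ℝ) :
    indic F c = ∑ i ∈ F, c i • eb i := by
  ext j
  have hsum : ∀ G : Finset ℕ, (∑ i ∈ G, c i • eb i) j = ∑ i ∈ G, c i * eb i j := by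
    intro G
    induction G using Finset.induction with
    | empty => simp
    | insert x s hx ih =>
      rw [Finset.sum_insert hx, Finset.sum_insert hx, ZeroAtInftyContinuousMap.coe_add,
        Pi.add_apply, ih, ZeroAtInftyContinuousMap.coe_smul, Pi.smul_apply, smul_eq_mul]
  rw [hsum]
  simp only [eb, indic_apply, Finset.mem_singleton]
  by_cases hj : j ∈ F
  · rw [if_pos hj, Finset.sum_eq_single j]
    · simp
    · intro b _ hb; simp [Ne.symm hb]
    · intro h; exact absurd hj h
  · rw [if_neg hj, Finset.sum_eq_zero]
    intro b hb
    have : ¬ j = b := fun h => hj (h ▸ hb)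
    simp [this]

lemma apply_indic (f : StrongDual ℝ C₀(ℕ, ℝ)) (F : Finset ℕ) (c : ℕ → ℝ) :
    f (indic F c) = ∑ i ∈ F, c i * f (eb i) := by
  rw [indic_eq_sum, map_sum]
  simp [smul_eq_mul]

/-- Lemma 1 -/
lemma sum_abs_le_norm (f : StrongDual ℝ C₀(ℕ, ℝ)) (F : Finset ℕ) :
    ∑ i ∈ F, |f (eb i)| ≤ ‖f‖ := by
  set c : ℕ → ℝ := fun i => if 0 ≤ f (eb i) then 1 else -1 with hc
  have h1 : ‖indic F c‖ ≤ 1 := by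
    apply c0_norm_le _ zero_le_one
    intro j
    simp only [indic_apply]
    split_ifs with h
    · simp only [hc]; split_ifs <;> norm_num
    · norm_num
  calc ∑ i ∈ F, |f (eb i)| = f (indic F c) := by
        rw [apply_indic]
        refine Finset.sum_congr rfl fun i _ => ?_
        simp only [hc]
        split_ifs with h
        · rw [one_mul, abs_of_nonneg h]
        · rw [neg_one_mul, abs_of_neg (lt_of_not_ge h)]
    _ ≤ |f (indic F c)| := le_abs_self _
    _ ≤ ‖f‖ * ‖indic F c‖ := f.le_opNorm _
    _ ≤ ‖f‖ * 1 := by nlinarith [norm_nonneg f]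
    _ = ‖f‖ := mul_one _

/-- Lemma 2 -/
lemma exists_finset_sum_gt (f : StrongDual ℝ C₀(ℕ, ℝ)) {r : ℝ} (hr : r < ‖f‖) :
    ∃ F : Finset ℕ, r < ∑ i ∈ F, |f (eb i)| := by
  obtain ⟨x, hx1, hxr⟩ := f.exists_lt_apply_of_lt_opNorm hr
  set δ : ℝ := (‖f x‖ - r) / (‖f‖ + 1) with hδ
  have hf1 : (0:ℝ) < ‖f‖ + 1 := by positivity
  have hδpos : 0 < δ := div_pos (by linarith) hf1
  -- finite set where |x j| ≥ δ
  have hcof : ∀ᶠ j in cofinite, ‖x j‖ < δ := by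
    have := x.zero_at_infty'
    rw [cocompact_eq_cofinite] at this
    exact (this.eventually (Metric.ball_mem_nhds 0 hδpos)).mono (by
      intro j hj; simpa [Real.norm_eq_abs, abs_sub_comm] using hj)
  obtain ⟨S, hS⟩ : ∃ S : Finset ℕ, ∀ j ∉ S, ‖x j‖ < δ := by
    have hfin : {j | ¬ ‖x j‖ < δ}.Finite := hcof
    exact ⟨hfin.toFinset, fun j hj => by
      by_contra h
      exact hj (hfin.mem_toFinset.2 h)⟩
  set y := indic S x with hy
  have hxy : ‖x - y‖ ≤ δ := by
    apply c0_norm_le _ hδpos.le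
    intro j
    simp only [ZeroAtInftyContinuousMap.coe_sub, Pi.sub_apply, hy, indic_apply]
    by_cases hj : j ∈ S
    · simp [hj, hδpos.le]
    · rw [if_neg hj, sub_zero]
      exact (hS j hj).le
  have hfy : r < |f y| := by
    have h1 : ‖f x - f y‖ ≤ ‖f‖ * δ := by
      rw [← map_sub]
      exact f.le_opNorm_of_le hxy
    have h2 : ‖f‖ * δ < ‖f x‖ - r := by
      rw [hδ]
      have : ‖f‖ / (‖f‖ + 1) < 1 := by
        rw [div_lt_one hf1]; linarith
      calc ‖f‖ * ((‖f x‖ - r) / (‖f‖ + 1)) = (‖f‖ / (‖f‖ + 1)) * (‖f x‖ - r) := by ring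
        _ < 1 * (‖f x‖ - r) := by
            apply mul_lt_mul_of_pos_right this; linarith
        _ = ‖f x‖ - r := one_mul _
    have : ‖f x‖ - ‖f y‖ ≤ ‖f x - f y‖ := by
      have := norm_sub_norm_le (f x) (f y); simpa using this
    have : ‖f y‖ > r := by linarith
    simpa [Real.norm_eq_abs] using this
  refine ⟨S, lt_of_lt_of_le hfy ?_⟩
  rw [hy, apply_indic]
  calc |∑ i ∈ S, x i * f (eb i)| ≤ ∑ i ∈ S, |x i * f (eb i)| := Finset.abs_sum_le_sum_abs _ _
    _ ≤ ∑ i ∈ S, |f (eb i)| := by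
        apply Finset.sum_le_sum
        intro i _
        rw [abs_mul]
        have hxi : |x i| ≤ 1 := by
          have := c0_apply_le x i
          linarith
        nlinarith [abs_nonneg (f (eb i))]

end Aux

/-- The canonical norm of `c₀(ℕ)` is metric weak-star Kadec-Klee: for every `x*` in the dual
of `c₀(ℕ)` (which is identified with `ℓ¹(ℕ)`) and every weak-star null sequence `(xₙ*)` in the
dual, `limsup ‖x* + xₙ*‖ ≥ ‖x*‖ + limsup ‖xₙ*‖`. -/
theorem stmt0 (xstar : StrongDual ℝ C₀(ℕ, ℝ)) (xs : ℕ → StrongDual ℝ C₀(ℕ, ℝ))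
    (hweakstar : ∀ x : C₀(ℕ, ℝ), Tendsto (fun n => xs n x) atTop (𝓝 0)) :
    limsup (fun n => ‖xstar + xs n‖) atTop ≥ ‖xstar‖ + limsup (fun n => ‖xs n‖) atTop := by
  obtain ⟨C, hC⟩ : ∃ C, ∀ n, ‖xs n‖ ≤ C := by
    apply banach_steinhaus
    intro x
    obtain ⟨b, hb⟩ := ((hweakstar x).norm).bddAbove_range
    exact ⟨b, fun n => hb (Set.mem_range_self n)⟩
  set L := limsup (fun n => ‖xs n‖) atTop with hLdef
  set M := limsup (fun n => ‖xstar + xs n‖) atTop with hMdef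
  have hbdd1 : IsBoundedUnder (· ≤ ·) atTop (fun n => ‖xs n‖) :=
    Filter.isBoundedUnder_of ⟨C, hC⟩
  have hbdd2 : IsBoundedUnder (· ≤ ·) atTop (fun n => ‖xstar + xs n‖) :=
    Filter.isBoundedUnder_of ⟨‖xstar‖ + C, fun n =>
      (norm_add_le xstar (xs n)).trans (by linarith [hC n])⟩
  have hcobdd : IsCoboundedUnder (· ≤ ·) atTop (fun n => ‖xs n‖) :=
    IsBoundedUnder.isCoboundedUnder_le (Filter.isBoundedUnder_of ⟨0, fun n => norm_nonneg (xs n)⟩)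
  have key : ∀ ε : ℝ, 0 < ε → ‖xstar‖ + L - 6 * ε ≤ M := by
    intro ε hε
    obtain ⟨F, hF⟩ := exists_finset_sum_gt xstar (r := ‖xstar‖ - ε) (by linarith)
    have hFtail : ∀ G : Finset ℕ, Disjoint F G → ∑ i ∈ G, |xstar (eb i)| < ε := by
      intro G hdisj
      have h1 := sum_abs_le_norm xstar (F ∪ G)
      rw [Finset.sum_union hdisj] at h1
      linarith
    have hev : ∀ᶠ n in atTop, ∑ i ∈ F, |xs n (eb i)| < ε := by
      have htend : Tendsto (fun n => ∑ i ∈ F, |xs n (eb i)|) atTop (𝓝 0) := by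
        have := tendsto_finset_sum F (fun i _ => (hweakstar (eb i)).abs)
        simpa using this
      have := htend.eventually (eventually_lt_nhds hε)
      simpa using this
    have hfreq : ∃ᶠ n in atTop, L - ε < ‖xs n‖ :=
      frequently_lt_of_lt_limsup hcobdd (by linarith [hLdef])
    have hfreq2 : ∃ᶠ n in atTop, ‖xstar‖ + L - 6 * ε ≤ ‖xstar + xs n‖ := by
      refine (hfreq.and_eventually hev).mono ?_
      rintro n ⟨hn1, hn2⟩
      obtain ⟨G, hG⟩ := exists_finset_sum_gt (xs n) (r := ‖xs n‖ - ε) (by linarith)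
      set G' := G \ F with hG'def
      have hdisj : Disjoint F G' := Finset.disjoint_sdiff
      have hsplit : ∑ i ∈ G ∩ F, |xs n (eb i)| + ∑ i ∈ G', |xs n (eb i)|
          = ∑ i ∈ G, |xs n (eb i)| := Finset.sum_inter_add_sum_sdiff G F _
      have hinter : ∑ i ∈ G ∩ F, |xs n (eb i)| ≤ ∑ i ∈ F, |xs n (eb i)| :=
        Finset.sum_le_sum_of_subset_of_nonneg (Finset.inter_subset_right)
          (fun i _ _ => abs_nonneg _)
      have hG'big : ‖xs n‖ - 2 * ε < ∑ i ∈ G', |xs n (eb i)| := by linarith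
      have ha' : ∑ i ∈ G', |xstar (eb i)| < ε := hFtail G' hdisj
      have hmain := sum_abs_le_norm (xstar + xs n) (F ∪ G')
      rw [Finset.sum_union hdisj] at hmain
      have hFge : ∑ i ∈ F, |xstar (eb i)| - ∑ i ∈ F, |xs n (eb i)|
          ≤ ∑ i ∈ F, |(xstar + xs n) (eb i)| := by
        rw [← Finset.sum_sub_distrib]
        refine Finset.sum_le_sum fun i _ => ?_
        have : (xstar + xs n) (eb i) = xstar (eb i) + xs n (eb i) := rfl
        rw [this]
        have := abs_add_le (xstar (eb i) + xs n (eb i)) (-(xs n (eb i)))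
        simp only [add_neg_cancel_right, abs_neg] at this
        linarith
      have hG'ge : ∑ i ∈ G', |xs n (eb i)| - ∑ i ∈ G', |xstar (eb i)|
          ≤ ∑ i ∈ G', |(xstar + xs n) (eb i)| := by
        rw [← Finset.sum_sub_distrib]
        refine Finset.sum_le_sum fun i _ => ?_
        have : (xstar + xs n) (eb i) = xstar (eb i) + xs n (eb i) := rfl
        rw [this]
        have := abs_add_le (xstar (eb i) + xs n (eb i)) (-(xstar (eb i)))
        simp only [abs_neg] at this
        have h2 : xstar (eb i) + xs n (eb i) + -(xstar (eb i)) = xs n (eb i) := by ring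
        rw [h2] at this
        linarith
      linarith
    exact le_limsup_of_frequently_le hfreq2 hbdd2
  have : ∀ ε : ℝ, 0 < ε → ‖xstar‖ + L ≤ M + ε := by
    intro ε hε
    have := key (ε / 6) (by linarith)
    linarith
  exact le_of_forall_pos_le_add this
end

section
/- Let X be a separable Banach space whose norm is c-Lipschitz weak-star Kadec-Klee for some c ∈ (0,1]. Then for every x ∈ X and every weakly null sequence (xₙ) in X such that lim ‖xₙ‖ and lim ‖x + xₙ‖ exist, one has lim ‖x + xₙ‖ ≤ max(‖x‖, (1/c) · lim ‖xₙ‖). -/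
open Filter Topology NormedSpace

theorem seqBA {X : Type*} [NormedAddCommGroup X] [NormedSpace ℝ X]
    [TopologicalSpace.SeparableSpace X]
    (fs : ℕ → StrongDual ℝ X) (hb : ∀ n, ‖fs n‖ ≤ 1) :
    ∃ (f : StrongDual ℝ X) (φ : ℕ → ℕ), StrictMono φ ∧
      ∀ y : X, Tendsto (fun j => fs (φ j) y) atTop (𝓝 (f y)) := by
  have : Nonempty X := ⟨0⟩
  set v : ℕ → X := TopologicalSpace.denseSeq X
  have hv : DenseRange v := TopologicalSpace.denseRange_denseSeq X
  -- compact set in Π k, ℝ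
  set T : Set (ℕ → ℝ) := Set.pi Set.univ (fun k => Set.Icc (-‖v k‖) ‖v k‖) with hT
  have hTc : IsCompact T := isCompact_univ_pi fun k => isCompact_Icc
  have hmem : ∀ n, (fun k => fs n (v k)) ∈ T := by
    intro n k _
    have := (fs n).le_opNorm (v k)
    have h1 : |fs n (v k)| ≤ ‖v k‖ := by
      calc |fs n (v k)| = ‖fs n (v k)‖ := rfl
        _ ≤ ‖fs n‖ * ‖v k‖ := (fs n).le_opNorm (v k)
        _ ≤ 1 * ‖v k‖ := by
            exact mul_le_mul_of_nonneg_right (hb n) (norm_nonneg _)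
        _ = ‖v k‖ := one_mul _
    exact abs_le.1 h1
  obtain ⟨a, -, φ, hφ, ha⟩ := hTc.tendsto_subseq hmem
  have hptk : ∀ k, Tendsto (fun j => fs (φ j) (v k)) atTop (𝓝 (a k)) := by
    intro k
    exact (tendsto_pi_nhds.1 ha) k
  -- Cauchy at every point
  have hcauchy : ∀ y : X, CauchySeq fun j => fs (φ j) y := by
    intro y
    rw [Metric.cauchySeq_iff]
    intro ε hε
    obtain ⟨k, hk⟩ := Metric.denseRange_iff.1 hv y (ε / 4) (by linarith)
    have : CauchySeq fun j => fs (φ j) (v k) := (hptk k).cauchySeq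
    obtain ⟨N, hN⟩ := Metric.cauchySeq_iff.1 this (ε / 4) (by linarith)
    refine ⟨N, fun m hm n hn => ?_⟩
    have hyk : ∀ j, |fs (φ j) y - fs (φ j) (v k)| ≤ ε / 4 := by
      intro j
      have : fs (φ j) y - fs (φ j) (v k) = fs (φ j) (y - v k) := by
        rw [map_sub]
      rw [this]
      calc |fs (φ j) (y - v k)| = ‖fs (φ j) (y - v k)‖ := rfl
        _ ≤ ‖fs (φ j)‖ * ‖y - v k‖ := (fs (φ j)).le_opNorm _
        _ ≤ 1 * ‖y - v k‖ := mul_le_mul_of_nonneg_right (hb _) (norm_nonneg _)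
        _ ≤ ε / 4 := by
            rw [one_mul]
            have := hk
            rw [dist_eq_norm] at this
            linarith [this.le]
    have h2 := hN m hm n hn
    rw [Real.dist_eq] at h2 ⊢
    have := hyk m
    have := hyk n
    set A := fs (φ m) y; set B := fs (φ n) y
    set A' := fs (φ m) (v k); set B' := fs (φ n) (v k)
    calc |A - B| = |(A - A') + (A' - B') + (B' - B)| := by ring_nf
      _ ≤ |A - A'| + |A' - B'| + |B' - B| := by
          exact (abs_add_three _ _ _)
      _ < ε := by
          have h3 : |B' - B| = |B - B'| := abs_sub_comm _ _
          rw [h3]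
          linarith [hyk m, hyk n, h2]
  have hconv : ∀ y : X, ∃ r : ℝ, Tendsto (fun j => fs (φ j) y) atTop (𝓝 r) :=
    fun y => cauchySeq_tendsto_of_complete (hcauchy y)
  choose F hF using hconv
  have hbdd : Bornology.IsBounded (Set.range fun j => fs (φ j)) := by
    apply Bornology.IsBounded.subset (Metric.isBounded_closedBall (x := (0 : StrongDual ℝ X)) (r := 1))
    rintro g ⟨j, rfl⟩
    simpa [mem_closedBall_zero_iff] using hb (φ j)
  refine ⟨ContinuousLinearMap.ofTendstoOfBoundedRange F (fun j => fs (φ j))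
    (tendsto_pi_nhds.2 hF) hbdd, φ, hφ, ?_⟩
  intro y
  simpa using hF y

/-- Let `X` be a separable Banach space whose norm is `c`-Lipschitz weak-star Kadec-Klee for
some `c ∈ (0,1]`. Then for every `x ∈ X` and every weakly null sequence `(xₙ)` in `X` such that
`lim ‖xₙ‖` and `lim ‖x + xₙ‖` exist, `lim ‖x + xₙ‖ ≤ max (‖x‖, (1/c) ⬝ lim ‖xₙ‖)`. -/
theorem stmt1 {X : Type*} [NormedAddCommGroup X] [NormedSpace ℝ X] [CompleteSpace X]
    [TopologicalSpace.SeparableSpace X]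
    (c : ℝ) (hc0 : 0 < c) (hc1 : c ≤ 1)
    (hLKK : ∀ (f : StrongDual ℝ X) (fs : ℕ → StrongDual ℝ X),
      (∀ x : X, Tendsto (fun n => fs n x) atTop (𝓝 0)) →
      limsup (fun n => ‖f + fs n‖) atTop ≥ ‖f‖ + c * limsup (fun n => ‖fs n‖) atTop)
    (x : X) (xs : ℕ → X)
    (hweak : ∀ f : StrongDual ℝ X, Tendsto (fun n => f (xs n)) atTop (𝓝 0))
    (L l : ℝ)
    (hL : Tendsto (fun n => ‖x + xs n‖) atTop (𝓝 L))
    (hl : Tendsto (fun n => ‖xs n‖) atTop (𝓝 l)) :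
    L ≤ max ‖x‖ ((1 / c) * l) := by
  -- norming functionals
  have hnorm : ∀ n, ∃ g : StrongDual ℝ X, ‖g‖ ≤ 1 ∧ g (x + xs n) = ‖x + xs n‖ :=
    fun n => exists_dual_vector'' ℝ (x + xs n)
  choose fs hfs1 hfs2 using hnorm
  obtain ⟨f, φ, hφ, hfpt⟩ := seqBA fs hfs1
  have hl0 : 0 ≤ l := le_of_tendsto_of_tendsto' tendsto_const_nhds hl fun n => norm_nonneg _
  have hf1 : ‖f‖ ≤ 1 := by
    refine f.opNorm_le_bound zero_le_one fun y => ?_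
    have : Tendsto (fun j => ‖fs (φ j) y‖) atTop (𝓝 ‖f y‖) := (hfpt y).norm
    refine le_of_tendsto this (Eventually.of_forall fun j => ?_)
    calc ‖fs (φ j) y‖ ≤ ‖fs (φ j)‖ * ‖y‖ := (fs (φ j)).le_opNorm y
      _ ≤ 1 * ‖y‖ := mul_le_mul_of_nonneg_right (hfs1 _) (norm_nonneg _)
  -- the weak*-null perturbations
  set g : ℕ → StrongDual ℝ X := fun j => fs (φ j) - f with hg
  have hgnull : ∀ y : X, Tendsto (fun j => g j y) atTop (𝓝 0) := by
    intro y
    have := (hfpt y).sub_const (f y)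
    simpa [hg] using this
  have hgbdd : ∀ j, ‖g j‖ ≤ 2 := by
    intro j
    calc ‖g j‖ ≤ ‖fs (φ j)‖ + ‖f‖ := norm_sub_le _ _
      _ ≤ 1 + 1 := add_le_add (hfs1 _) hf1
      _ = 2 := by norm_num
  have hbddAbove : IsBoundedUnder (· ≤ ·) atTop (fun j => ‖g j‖) :=
    isBoundedUnder_of ⟨2, hgbdd⟩
  have hbddBelow : IsBoundedUnder (· ≥ ·) atTop (fun j => ‖g j‖) :=
    isBoundedUnder_of ⟨0, fun j => norm_nonneg _⟩
  set s : ℝ := limsup (fun j => ‖g j‖) atTop with hs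
  have hKK := hLKK f g hgnull
  -- limsup ‖f + g j‖ ≤ 1 since f + g j = fs (φ j)
  have hfg : ∀ j, f + g j = fs (φ j) := fun j => by simp [hg]
  have hup : limsup (fun j => ‖f + g j‖) atTop ≤ 1 := by
    apply limsup_le_of_le
    · exact isCoboundedUnder_le_of_eventually_le atTop
        (Eventually.of_forall fun j => norm_nonneg _)
    · exact Eventually.of_forall fun j => by rw [hfg]; exact hfs1 _
  have hsle : s ≤ (1 - ‖f‖) / c := by
    have h1 : ‖f‖ + c * s ≤ 1 := le_trans hKK hup
    rw [ge_iff_le, div_eq_inv_mul, ← hs] at *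
    rw [le_inv_mul_iff₀ hc0]
    linarith
  have hs0 : 0 ≤ s := le_limsup_of_frequently_le
    (Frequently.of_forall fun j => norm_nonneg _) hbddAbove
  -- L = lim fs (φ j) (x + xs (φ j))
  have hLsub : Tendsto (fun j => ‖x + xs (φ j)‖) atTop (𝓝 L) :=
    hL.comp hφ.tendsto_atTop
  have hlsub : Tendsto (fun j => ‖xs (φ j)‖) atTop (𝓝 l) :=
    hl.comp hφ.tendsto_atTop
  have hLval : Tendsto (fun j => fs (φ j) (x + xs (φ j))) atTop (𝓝 L) := by
    have : (fun j => fs (φ j) (x + xs (φ j))) = fun j => ‖x + xs (φ j)‖ := by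
      funext j; exact hfs2 (φ j)
    rw [this]; exact hLsub
  -- decompose
  have hdecomp : ∀ j, fs (φ j) (x + xs (φ j)) =
      f x + g j x + f (xs (φ j)) + g j (xs (φ j)) := by
    intro j
    simp only [hg, ContinuousLinearMap.sub_apply, map_add]
    ring
  have hgx : Tendsto (fun j => g j x) atTop (𝓝 0) := hgnull x
  have hfxs : Tendsto (fun j => f (xs (φ j))) atTop (𝓝 0) :=
    (hweak f).comp hφ.tendsto_atTop
  have hrem : Tendsto (fun j => g j (xs (φ j))) atTop (𝓝 (L - f x)) := by
    have h2 : Tendsto (fun j => fs (φ j) (x + xs (φ j)) - f x - g j x - f (xs (φ j)))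
        atTop (𝓝 (L - f x - 0 - 0)) := ((hLval.sub tendsto_const_nhds).sub hgx).sub hfxs
    have : (fun j => fs (φ j) (x + xs (φ j)) - f x - g j x - f (xs (φ j))) =
        fun j => g j (xs (φ j)) := by
      funext j; rw [hdecomp j]; ring
    rw [this] at h2
    simpa using h2
  -- bound L - f x ≤ s * l
  have hkey : L - f x ≤ s * l := by
    have hall : ∀ ε : ℝ, 0 < ε → L - f x ≤ (s + ε) * (l + ε) := by
      intro ε hε
      have h1 : ∀ᶠ j in atTop, ‖g j‖ < s + ε :=
        eventually_lt_of_limsup_lt (by linarith) hbddAbove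
      have h2 : ∀ᶠ j in atTop, ‖xs (φ j)‖ < l + ε := by
        have := hlsub.eventually (eventually_lt_nhds (by linarith : l < l + ε))
        exact this
      refine le_of_tendsto hrem ?_
      filter_upwards [h1, h2] with j hj1 hj2
      calc g j (xs (φ j)) ≤ |g j (xs (φ j))| := le_abs_self _
        _ ≤ ‖g j‖ * ‖xs (φ j)‖ := (g j).le_opNorm _
        _ ≤ (s + ε) * (l + ε) := by
            apply mul_le_mul hj1.le hj2.le (norm_nonneg _)
            linarith [norm_nonneg (g j), hj1]
    have htend : Tendsto (fun ε : ℝ => (s + ε) * (l + ε)) (𝓝[>] 0) (𝓝 (s * l)) := by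
      have : Tendsto (fun ε : ℝ => (s + ε) * (l + ε)) (𝓝 0) (𝓝 ((s + 0) * (l + 0))) := by
        exact ((tendsto_const_nhds.add tendsto_id).mul (tendsto_const_nhds.add tendsto_id))
      simpa using this.mono_left nhdsWithin_le_nhds
    exact ge_of_tendsto htend (eventually_nhdsWithin_of_forall fun ε hε => hall ε hε)
  have hLle : L ≤ ‖f‖ * ‖x‖ + (1 - ‖f‖) * ((1 / c) * l) := by
    have h1 : f x ≤ ‖f‖ * ‖x‖ := le_trans (le_abs_self _) (f.le_opNorm x)
    have h2 : s * l ≤ ((1 - ‖f‖) / c) * l := mul_le_mul_of_nonneg_right hsle hl0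
    have h3 : ((1 - ‖f‖) / c) * l = (1 - ‖f‖) * ((1 / c) * l) := by ring
    linarith [h3 ▸ h2]
  have hB0 : 0 ≤ (1 / c) * l := mul_nonneg (by positivity) hl0
  have hf0 : 0 ≤ ‖f‖ := norm_nonneg f
  rcases le_total ‖x‖ ((1 / c) * l) with h | h
  · rw [max_eq_right h]
    nlinarith
  · rw [max_eq_left h]
    nlinarith
end

section
/- Let X be a separable Banach space whose norm is c-Lipschitz weak-star Kadec-Klee for some c ∈ (0,1]. Then for every x ∈ X and every weakly null sequence (xₙ) in X, limsup ‖x + xₙ‖ ≥ max(‖x‖, (1/(2−c)) · limsup ‖xₙ‖). -/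
open Filter Topology NormedSpace

private lemma aux_le_mul {a b c : ℝ} (h : ∀ ε : ℝ, 0 < ε → a ≤ (b + ε) * (c + ε) + ε) :
    a ≤ b * c := by
  have hcont : Tendsto (fun ε : ℝ => (b + ε) * (c + ε) + ε) (𝓝[>] (0:ℝ)) (𝓝 (b * c)) := by
    have h1 : Continuous fun ε : ℝ => (b + ε) * (c + ε) + ε := by continuity
    have h0 := h1.tendsto 0
    simp only [add_zero] at h0
    exact h0.mono_left nhdsWithin_le_nhds
  exact ge_of_tendsto hcont (eventually_nhdsWithin_of_forall fun ε hε => h ε hε)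

private lemma aux_limsup_comp_le {u : ℕ → ℝ} {φ : ℕ → ℕ} {C : ℝ} (hφ : StrictMono φ)
    (h0 : ∀ n, 0 ≤ u n) (hC : ∀ n, u n ≤ C) :
    limsup (fun n => u (φ n)) atTop ≤ limsup u atTop := by
  refine le_of_forall_sub_le fun ε hε => sub_le_iff_le_add.mpr ?_
  have hb : IsBoundedUnder (· ≤ ·) atTop u := isBoundedUnder_of ⟨C, hC⟩
  have hev : ∀ᶠ n in atTop, u n < limsup u atTop + ε :=
    eventually_lt_of_limsup_lt (by linarith) hb
  have hev2 : ∀ᶠ n in atTop, u (φ n) < limsup u atTop + ε :=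
    hφ.tendsto_atTop.eventually hev
  exact limsup_le_of_le
    ((isBoundedUnder_of ⟨0, fun n => h0 (φ n)⟩ :
      IsBoundedUnder (· ≥ ·) atTop fun n => u (φ n)).isCoboundedUnder_le)
    (hev2.mono fun n hn => hn.le)

set_option maxHeartbeats 1000000 in
/-- Let `X` be a separable Banach space whose norm is `c`-Lipschitz weak-star Kadec-Klee for
some `x ∈ X` and every weakly null sequence. -/
theorem stmt2 {X : Type*} [NormedAddCommGroup X] [NormedSpace ℝ X] [CompleteSpace X]
    [TopologicalSpace.SeparableSpace X]
    (c : ℝ) (hc0 : 0 < c) (hc1 : c ≤ 1)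
    (hLKK : ∀ (f : StrongDual ℝ X) (fs : ℕ → StrongDual ℝ X),
      (∀ x : X, Tendsto (fun n => fs n x) atTop (𝓝 0)) →
      limsup (fun n => ‖f + fs n‖) atTop ≥ ‖f‖ + c * limsup (fun n => ‖fs n‖) atTop)
    (x : X) (xs : ℕ → X)
    (hweak : ∀ f : StrongDual ℝ X, Tendsto (fun n => f (xs n)) atTop (𝓝 0)) :
    limsup (fun n => ‖x + xs n‖) atTop ≥
      max ‖x‖ ((1 / (2 - c)) * limsup (fun n => ‖xs n‖) atTop) := by
  haveI : Nonempty X := ⟨0⟩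
  -- generic bounds for norm-one functionals
  have habs : ∀ g : StrongDual ℝ X, ‖g‖ ≤ 1 → ∀ z : X, ‖g z‖ ≤ ‖z‖ := by
    intro g hg z
    calc ‖g z‖ ≤ ‖g‖ * ‖z‖ := g.le_opNorm z
      _ ≤ 1 * ‖z‖ := mul_le_mul_of_nonneg_right hg (norm_nonneg z)
      _ = ‖z‖ := one_mul _
  have happ : ∀ g : StrongDual ℝ X, ‖g‖ ≤ 1 → ∀ z : X, g z ≤ ‖z‖ := by
    intro g hg z
    calc g z ≤ |g z| := le_abs_self _
      _ = ‖g z‖ := (Real.norm_eq_abs _).symm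
      _ ≤ ‖z‖ := habs g hg z
  -- boundedness of the sequence, via Banach–Steinhaus in the double dual
  obtain ⟨C, hC⟩ : ∃ C : ℝ, ∀ n, ‖xs n‖ ≤ C := by
    obtain ⟨C, hC⟩ := banach_steinhaus (𝕜 := ℝ) (𝕜₂ := ℝ)
      (g := fun n => inclusionInDoubleDual ℝ X (xs n)) (by
        intro f
        have h0 : Tendsto (fun n => ‖f (xs n)‖) atTop (𝓝 ‖(0:ℝ)‖) := (hweak f).norm
        obtain ⟨b, hb⟩ := h0.bddAbove_range
        exact ⟨b, fun n => hb ⟨n, rfl⟩⟩)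
    refine ⟨C, fun n => ?_⟩
    obtain ⟨g, hg1, hg2⟩ := exists_dual_vector'' ℝ (xs n)
    have hg2' : g (xs n) = ‖xs n‖ := by exact_mod_cast hg2
    calc ‖xs n‖ = g (xs n) := hg2'.symm
      _ ≤ ‖inclusionInDoubleDual ℝ X (xs n) g‖ := by
          rw [dual_def]; exact le_abs_self _
      _ ≤ ‖inclusionInDoubleDual ℝ X (xs n)‖ * ‖g‖ := (inclusionInDoubleDual ℝ X (xs n)).le_opNorm g
      _ ≤ C * 1 := mul_le_mul (hC n) hg1 (norm_nonneg _) ((norm_nonneg _).trans (hC n))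
      _ = C := mul_one C
  set L := limsup (fun n => ‖xs n‖) atTop with hLdef
  set M := limsup (fun n => ‖x + xs n‖) atTop with hMdef
  have hvC : ∀ n, ‖x + xs n‖ ≤ ‖x‖ + C := fun n => (norm_add_le _ _).trans (by linarith [hC n])
  have hvb : IsBoundedUnder (· ≤ ·) atTop fun n => ‖x + xs n‖ := isBoundedUnder_of ⟨‖x‖ + C, hvC⟩
  -- Part 1 : ‖x‖ ≤ M
  have hxM : ‖x‖ ≤ M := by
    obtain ⟨f0, hf01, hf0x⟩ := exists_dual_vector'' ℝ x
    have hf0x' : f0 x = ‖x‖ := by exact_mod_cast hf0x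
    refine le_of_forall_sub_le fun ε hε => ?_
    refine le_limsup_of_frequently_le (Eventually.frequently ?_) hvb
    have h1 : ∀ᶠ n in atTop, -ε < f0 (xs n) :=
      (hweak f0).eventually (eventually_gt_nhds (by linarith))
    filter_upwards [h1] with n hn
    have h2 : f0 (x + xs n) ≤ ‖x + xs n‖ := happ f0 hf01 _
    rw [map_add, hf0x'] at h2
    linarith
  have hMnn : 0 ≤ M := (norm_nonneg x).trans hxM
  -- extraction realizing the limsup of ‖xs n‖ from below
  have hfreq : ∀ m : ℕ, ∃ᶠ k in atTop, L - 1 / (m + 1) < ‖xs k‖ := by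
    intro m
    apply frequently_lt_of_lt_limsup
      ((isBoundedUnder_of ⟨0, fun n => norm_nonneg (xs n)⟩ :
        IsBoundedUnder (· ≥ ·) atTop fun n => ‖xs n‖).isCoboundedUnder_le)
    have : (0:ℝ) < 1 / (m + 1) := by positivity
    rw [← hLdef]; linarith
  obtain ⟨ψ, hψmono, hψ⟩ := extraction_forall_of_frequently hfreq
  -- norming functionals
  have hch : ∀ m, ∃ g : StrongDual ℝ X, ‖g‖ ≤ 1 ∧ g (xs (ψ m)) = ‖xs (ψ m)‖ := by
    intro m
    obtain ⟨g, h1, h2⟩ := exists_dual_vector'' ℝ (xs (ψ m))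
    exact ⟨g, h1, by exact_mod_cast h2⟩
  choose F hF1 hF2 using hch
  -- diagonal extraction: weak-star convergent subsequence of (F m)
  set D : ℕ → X := TopologicalSpace.denseSeq X with hDdef
  have hD : DenseRange D := TopologicalSpace.denseRange_denseSeq X
  have hs : IsCompact (Set.univ.pi fun k => Set.Icc (-‖D k‖) ‖D k‖) :=
    isCompact_univ_pi fun k => isCompact_Icc
  have hmem : ∀ m, (fun k => F m (D k)) ∈ Set.univ.pi fun k => Set.Icc (-‖D k‖) ‖D k‖ := by
    intro m
    refine Set.mem_univ_pi.mpr fun k => ?_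
    have := habs (F m) (hF1 m) (D k)
    rw [Real.norm_eq_abs] at this
    exact Set.mem_Icc.mpr (abs_le.mp this)
  obtain ⟨g0, -, φ, hφmono, hφlim⟩ := hs.isSeqCompact hmem
  have hpt : ∀ k, Tendsto (fun n => F (φ n) (D k)) atTop (𝓝 (g0 k)) := by
    intro k
    have := tendsto_pi_nhds.mp hφlim k
    simpa [Function.comp] using this
  -- pointwise convergence everywhere, by density and equiboundedness
  have hcauchy : ∀ z : X, ∃ l : ℝ, Tendsto (fun n => F (φ n) z) atTop (𝓝 l) := by
    intro z
    apply cauchySeq_tendsto_of_complete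
    rw [Metric.cauchySeq_iff]
    intro ε hε
    obtain ⟨k, hk⟩ := hD.exists_dist_lt z (show (0:ℝ) < ε / 4 by linarith)
    have hck : CauchySeq fun n => F (φ n) (D k) := (hpt k).cauchySeq
    rw [Metric.cauchySeq_iff] at hck
    obtain ⟨N, hN⟩ := hck (ε / 4) (by linarith)
    refine ⟨N, fun m hm n hn => ?_⟩
    have h1 : |F (φ m) z - F (φ m) (D k)| ≤ ‖z - D k‖ := by
      rw [← Real.norm_eq_abs, ← map_sub]; exact habs _ (hF1 _) _
    have h2 : |F (φ n) (D k) - F (φ n) z| ≤ ‖z - D k‖ := by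
      rw [← Real.norm_eq_abs, ← map_sub]
      rw [(neg_sub z (D k)).symm, map_neg, norm_neg]
      exact habs _ (hF1 _) _
    have h3 := hN m hm n hn
    rw [Real.dist_eq] at h3 ⊢
    have hzk : ‖z - D k‖ < ε / 4 := by rw [← dist_eq_norm]; exact hk
    calc |F (φ m) z - F (φ n) z|
        = |(F (φ m) z - F (φ m) (D k)) + (F (φ m) (D k) - F (φ n) (D k))
            + (F (φ n) (D k) - F (φ n) z)| := by ring_nf
      _ ≤ |(F (φ m) z - F (φ m) (D k)) + (F (φ m) (D k) - F (φ n) (D k))|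
            + |F (φ n) (D k) - F (φ n) z| := abs_add_le _ _
      _ ≤ |F (φ m) z - F (φ m) (D k)| + |F (φ m) (D k) - F (φ n) (D k)|
            + |F (φ n) (D k) - F (φ n) z| := by
          have := abs_add_le (F (φ m) z - F (φ m) (D k)) (F (φ m) (D k) - F (φ n) (D k))
          linarith
      _ < ε := by linarith
  choose flim hflim using hcauchy
  let flin : X →ₗ[ℝ] ℝ :=
    { toFun := flim
      map_add' := fun z w => tendsto_nhds_unique (hflim (z + w))
        (by simpa only [map_add] using (hflim z).add (hflim w))
      map_smul' := fun a z => tendsto_nhds_unique (hflim (a • z))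
        (by simpa only [map_smul, smul_eq_mul, RingHom.id_apply]
          using (hflim z).const_mul a) }
  have hbound : ∀ z, ‖flin z‖ ≤ 1 * ‖z‖ := fun z => by
    rw [one_mul]
    exact le_of_tendsto (hflim z).norm (Eventually.of_forall fun n => habs _ (hF1 _) z)
  let f : StrongDual ℝ X := flin.mkContinuous 1 hbound
  have hfz : ∀ z : X, Tendsto (fun n => F (φ n) z) atTop (𝓝 (f z)) := hflim
  have hf1 : ‖f‖ ≤ 1 := flin.mkContinuous_norm_le zero_le_one hbound
  -- the subsequence and its properties
  set ρ : ℕ → ℕ := ψ ∘ φ with hρdef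
  have hρmono : StrictMono ρ := hψmono.comp hφmono
  have hzlow : ∀ n, L - 1 / (n + 1) < ‖xs (ρ n)‖ := by
    intro n
    have h1 := hψ (φ n)
    have h2 : (1:ℝ) / (φ n + 1) ≤ 1 / (n + 1) := by
      apply one_div_le_one_div_of_le (by positivity)
      have h3 : n ≤ φ n := hφmono.le_apply
      exact_mod_cast Nat.add_le_add_right h3 1
    calc L - 1 / (n + 1) ≤ L - 1 / (φ n + 1) := by linarith
      _ < ‖xs (ψ (φ n))‖ := h1
  have hgz : ∀ n, F (φ n) (xs (ρ n)) = ‖xs (ρ n)‖ := fun n => hF2 (φ n)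
  -- the weak-star null sequence F (φ n) - f
  have hwnull : ∀ z : X, Tendsto (fun n => (F (φ n) - f) z) atTop (𝓝 0) := by
    intro z
    simp only [ContinuousLinearMap.sub_apply]
    have := (hfz z).sub_const (f z)
    rwa [sub_self] at this
  have hgf2 : ∀ n, ‖F (φ n) - f‖ ≤ 2 := fun n =>
    (norm_sub_le _ _).trans (by linarith [hF1 (φ n)])
  set S := limsup (fun n => ‖F (φ n) - f‖) atTop with hSdef
  have hSnn : 0 ≤ S :=
    le_limsup_of_frequently_le (Frequently.of_forall fun n => norm_nonneg _)
      (isBoundedUnder_of ⟨2, hgf2⟩)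
  -- the LKK* estimate
  have hB : ‖f‖ + c * S ≤ 1 := by
    have h1 := hLKK f (fun n => F (φ n) - f) hwnull
    have heq : (fun n => ‖f + (F (φ n) - f)‖) = fun n => ‖F (φ n)‖ := by
      funext n; congr 1; abel
    rw [heq] at h1
    have h2 : limsup (fun n => ‖F (φ n)‖) atTop ≤ 1 :=
      limsup_le_of_le
        ((isBoundedUnder_of ⟨0, fun n => norm_nonneg (F (φ n))⟩ :
          IsBoundedUnder (· ≥ ·) atTop fun n => ‖F (φ n)‖).isCoboundedUnder_le)
        (Eventually.of_forall fun n => hF1 (φ n))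
    have := le_trans h1 h2
    linarith [this]
  -- limsup along the subsequence
  set Mρ := limsup (fun n => ‖x + xs (ρ n)‖) atTop with hMρdef
  have hMρM : Mρ ≤ M := by
    have h := aux_limsup_comp_le (u := fun k => ‖x + xs k‖) (φ := ρ) (C := ‖x‖ + C)
      hρmono (fun n => norm_nonneg _) hvC
    exact h
  have hMρb : IsBoundedUnder (· ≤ ·) atTop fun n => ‖x + xs (ρ n)‖ :=
    isBoundedUnder_of ⟨‖x‖ + C, fun n => hvC (ρ n)⟩
  have honediv : Tendsto (fun n : ℕ => 1 / ((n:ℝ) + 1)) atTop (𝓝 0) :=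
    tendsto_one_div_add_atTop_nhds_zero_nat
  have hzlow' : ∀ ε : ℝ, 0 < ε → ∀ᶠ n in atTop, L - ε ≤ ‖xs (ρ n)‖ := by
    intro ε hε
    have h1 : ∀ᶠ n : ℕ in atTop, (1:ℝ) / (n + 1) < ε :=
      honediv.eventually (eventually_lt_nhds hε)
    filter_upwards [h1] with n hn
    have := hzlow n
    linarith
  have hfzρ : Tendsto (fun n => f (xs (ρ n))) atTop (𝓝 0) :=
    (hweak f).comp hρmono.tendsto_atTop
  -- (C) : L ≤ S * Mρ
  have hC1 : L ≤ S * Mρ := by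
    apply aux_le_mul
    intro ε hε
    have e1 : ∀ᶠ n in atTop, ‖F (φ n) - f‖ < S + ε :=
      eventually_lt_of_limsup_lt (by rw [← hSdef]; linarith) (isBoundedUnder_of ⟨2, hgf2⟩)
    have e2 : ∀ᶠ n in atTop, ‖x + xs (ρ n)‖ < Mρ + ε :=
      eventually_lt_of_limsup_lt (by rw [← hMρdef]; linarith) hMρb
    have t1 : Tendsto (fun n => (F (φ n) - f) x) atTop (𝓝 0) := hwnull x
    have e3 : ∀ᶠ n in atTop, |(F (φ n) - f) x| < ε / 4 := by
      have := t1.abs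
      rw [abs_zero] at this
      exact this.eventually (eventually_lt_nhds (by linarith))
    have e4 : ∀ᶠ n in atTop, |f (xs (ρ n))| < ε / 4 := by
      have := hfzρ.abs
      rw [abs_zero] at this
      exact this.eventually (eventually_lt_nhds (by linarith))
    have e5 := hzlow' (ε / 2) (by linarith)
    obtain ⟨n, h1, h2, h3, h4, h5⟩ := (e1.and (e2.and (e3.and (e4.and e5)))).exists
    have hsplit : (F (φ n) - f) (x + xs (ρ n))
        = (F (φ n) - f) x + (‖xs (ρ n)‖ - f (xs (ρ n))) := by
      simp only [ContinuousLinearMap.sub_apply, map_add, ← hgz n]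
      try ring
    have hlow : L - ε ≤ (F (φ n) - f) (x + xs (ρ n)) := by
      rw [hsplit]
      have ha := abs_lt.mp h3
      have hb := abs_lt.mp h4
      linarith
    have hup : (F (φ n) - f) (x + xs (ρ n)) ≤ ‖F (φ n) - f‖ * ‖x + xs (ρ n)‖ := by
      calc (F (φ n) - f) (x + xs (ρ n)) ≤ |(F (φ n) - f) (x + xs (ρ n))| := le_abs_self _
        _ = ‖(F (φ n) - f) (x + xs (ρ n))‖ := (Real.norm_eq_abs _).symm
        _ ≤ ‖F (φ n) - f‖ * ‖x + xs (ρ n)‖ := (F (φ n) - f).le_opNorm _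
    have hprod : ‖F (φ n) - f‖ * ‖x + xs (ρ n)‖ ≤ (S + ε) * (Mρ + ε) :=
      mul_le_mul h1.le h2.le (norm_nonneg _) ((norm_nonneg _).trans h1.le)
    linarith
  have hC2 : L ≤ S * M := hC1.trans (mul_le_mul_of_nonneg_left hMρM hSnn)
  -- (D) : f x + L ≤ M
  have hDD : f x + L ≤ M := by
    refine le_of_forall_sub_le fun ε hε => ?_
    have e4 : ∀ᶠ n in atTop, |F (φ n) x - f x| < ε / 2 := by
      have := ((hfz x).sub_const (f x)).abs
      rw [sub_self, abs_zero] at this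
      exact this.eventually (eventually_lt_nhds (by linarith))
    have e5 := hzlow' (ε / 2) (by linarith)
    have hev : ∀ᶠ n in atTop, f x + L - ε ≤ ‖x + xs (ρ n)‖ := by
      filter_upwards [e4, e5] with n h4 h5
      have h6 : F (φ n) (x + xs (ρ n)) ≤ ‖x + xs (ρ n)‖ := happ _ (hF1 _) _
      rw [map_add, hgz n] at h6
      have := abs_lt.mp h4
      linarith
    have : f x + L - ε ≤ Mρ := le_limsup_of_frequently_le hev.frequently hMρb
    linarith [hMρM]
  have hfx : -(‖f‖ * M) ≤ f x := by
    have h1 : ‖f x‖ ≤ ‖f‖ * ‖x‖ := f.le_opNorm x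
    have h2 : ‖f‖ * ‖x‖ ≤ ‖f‖ * M := mul_le_mul_of_nonneg_left hxM (norm_nonneg f)
    have h3 := neg_abs_le (f x)
    rw [Real.norm_eq_abs] at h1
    linarith
  -- final algebra
  have hfinal : L ≤ (2 - c) * M := by
    rcases le_or_gt ‖f‖ (1 - c) with ht | ht
    · have h1 : L ≤ M + ‖f‖ * M := by linarith
      nlinarith
    · have hS1 : S ≤ 1 := by
        have h1 : c * S < c := by linarith
        exact le_of_lt ((mul_lt_mul_iff_right₀ hc0).mp (by linarith))
      have h2 : L ≤ 1 * M := hC2.trans (mul_le_mul_of_nonneg_right hS1 hMnn)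
      nlinarith
  rw [ge_iff_le, max_le_iff]
  refine ⟨hxM, ?_⟩
  have h2c : (0:ℝ) < 2 - c := by linarith
  rw [show (1 / (2 - c)) * L = L / (2 - c) by ring, div_le_iff₀ h2c]
  linarith
end

section
/- If a separable Banach space X has a c-Lipschitz weak-star Kadec-Klee norm for some c ∈ (0,1], then the dual X* is separable. -/
open Filter Topology NormedSpace

/-- In a metric space, a non-separable set contains an uncountable `ε`-separated subset
for some `ε > 0`. -/
lemma aux_exists_uncountable_separated {M : Type*} [MetricSpace M] {s : Set M}
    (hs : ¬ TopologicalSpace.IsSeparable s) :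
    ∃ ε : ℝ, 0 < ε ∧ ∃ A : Set M, A ⊆ s ∧ A.Pairwise (fun f g => ε ≤ dist f g) ∧
      ¬ A.Countable := by
  by_contra hcon
  push_neg at hcon
  apply hs
  have H : ∀ n : ℕ, ∃ A : Set M, A ⊆ s ∧ A.Countable ∧
      ∀ x ∈ s, ∃ a ∈ A, dist x a < ((n : ℝ) + 1)⁻¹ := by
    intro n
    set ε : ℝ := ((n : ℝ) + 1)⁻¹ with hε
    have hε0 : 0 < ε := by positivity
    have hchaincond : ∀ c ⊆ {A : Set M | A ⊆ s ∧ A.Pairwise (fun f g => ε ≤ dist f g)},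
        IsChain (· ⊆ ·) c →
        ∃ ub ∈ {A : Set M | A ⊆ s ∧ A.Pairwise (fun f g => ε ≤ dist f g)},
          ∀ t ∈ c, t ⊆ ub := by
      intro c hc hchain
      refine ⟨⋃₀ c, ⟨?_, ?_⟩, fun t ht => Set.subset_sUnion_of_mem ht⟩
      · exact Set.sUnion_subset fun t ht => (hc ht).1
      · intro a ha b hb hab
        obtain ⟨ta, hta, hata⟩ := ha
        obtain ⟨tb, htb, hbtb⟩ := hb
        rcases hchain.total hta htb with h | h
        · exact (hc htb).2 (h hata) hbtb hab
        · exact (hc hta).2 hata (h hbtb) hab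
    obtain ⟨m, hm⟩ := zorn_subset
        {A : Set M | A ⊆ s ∧ A.Pairwise (fun f g => ε ≤ dist f g)} hchaincond
    refine ⟨m, hm.1.1, hcon ε hε0 m hm.1.1 hm.1.2, ?_⟩
    · skip
      intro x hx
      by_contra hno
      push_neg at hno
      have hxm : x ∉ m := fun hxm => by
        have := hno x hxm
        simp only [dist_self] at this
        exact absurd this (not_le.2 hε0)
      have hins : insert x m ∈ {A : Set M | A ⊆ s ∧ A.Pairwise (fun f g => ε ≤ dist f g)} := by
        constructor
        · exact Set.insert_subset hx hm.1.1
        · intro a ha b hb hab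
          rcases ha with rfl | ha
          · rcases hb with rfl | hb
            · exact absurd rfl hab
            · exact hno b hb
          · rcases hb with rfl | hb
            · rw [dist_comm]; exact hno a ha
            · exact hm.1.2 ha hb hab
      exact hxm (hm.2 hins (Set.subset_insert x m) (Set.mem_insert x m))
  choose A hAs hAc hAd using H
  refine ⟨⋃ n, A n, Set.countable_iUnion hAc, ?_⟩
  intro x hx
  rw [Metric.mem_closure_iff]
  intro r hr
  obtain ⟨n, hn⟩ := exists_nat_one_div_lt hr
  obtain ⟨a, haA, hax⟩ := hAd n x hx
  refine ⟨a, Set.mem_iUnion.2 ⟨n, haA⟩, ?_⟩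
  rw [one_div] at hn
  exact hax.trans hn

/-- In a second countable space, an uncountable set has a point that lies in the closure of
the rest of the set. -/
lemma aux_exists_closure_point {α : Type*} [TopologicalSpace α]
    [SecondCountableTopology α]
    {A : Set α} (hA : ¬ A.Countable) : ∃ f ∈ A, f ∈ closure (A \ {f}) := by
  by_contra h
  push_neg at h
  apply hA
  obtain ⟨b, bct, -, hb⟩ := TopologicalSpace.exists_countable_basis α
  have key : ∀ f ∈ A, ∃ B ∈ b, f ∈ B ∧ B ∩ A ⊆ {f} := by
    intro f hf
    have hcl := h f hf
    rw [mem_closure_iff] at hcl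
    push_neg at hcl
    obtain ⟨U, hUo, hfU, hU⟩ := hcl
    obtain ⟨B, hBb, hfB, hBU⟩ := hb.exists_subset_of_mem_open hfU hUo
    refine ⟨B, hBb, hfB, ?_⟩
    intro y hy
    by_contra hne
    exact Set.eq_empty_iff_forall_notMem.mp hU y ⟨hBU hy.1, hy.2, hne⟩
  classical
  set F : α → Set α := fun f => if hf : f ∈ A then (key f hf).choose else ∅ with hF
  have hFb : Set.MapsTo F A b := by
    intro f hf
    simp only [hF, dif_pos hf]
    exact (key f hf).choose_spec.1
  have hFinj : Set.InjOn F A := by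
    intro f hf g hg hfg
    have h1 : g ∈ F f ∩ A := by
      rw [hfg]
      simp only [hF, dif_pos hg]
      exact ⟨(key g hg).choose_spec.2.1, hg⟩
    have h2 : F f ∩ A ⊆ {f} := by
      simp only [hF, dif_pos hf]
      exact (key f hf).choose_spec.2.2
    exact (h2 h1).symm
  exact hFb.countable_of_injOn hFinj bct

/-- If a separable Banach space `X` has a `c`-Lipschitz weak-star Kadec-Klee norm for some
`c ∈ (0,1]`, then the dual `X*` is separable. -/
theorem stmt3 {X : Type*} [NormedAddCommGroup X] [NormedSpace ℝ X] [CompleteSpace X]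
    [TopologicalSpace.SeparableSpace X]
    (c : ℝ) (hc0 : 0 < c) (hc1 : c ≤ 1)
    (hLKK : ∀ (f : StrongDual ℝ X) (fs : ℕ → StrongDual ℝ X),
      (∀ x : X, Tendsto (fun n => fs n x) atTop (𝓝 0)) →
      limsup (fun n => ‖f + fs n‖) atTop ≥ ‖f‖ + c * limsup (fun n => ‖fs n‖) atTop) :
    TopologicalSpace.SeparableSpace (StrongDual ℝ X) := by
  by_contra hns
  -- the dual is nontrivial, since otherwise it would be separable
  have hnt : Nontrivial (StrongDual ℝ X) := by
    by_contra h
    rw [not_nontrivial_iff_subsingleton] at h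
    exact hns (TopologicalSpace.SeparableSpace.mk ⟨Set.univ, Set.countable_univ, dense_univ⟩)
  -- the unit sphere of the dual is not a separable set
  have hsph : ¬ TopologicalSpace.IsSeparable (Metric.sphere (0 : StrongDual ℝ X) 1) := by
    intro hsep
    apply hns
    rw [← TopologicalSpace.isSeparable_univ_iff]
    have h1 : TopologicalSpace.IsSeparable
        (⋃ q : ℚ, (fun f : StrongDual ℝ X => (q : ℝ) • f) '' Metric.sphere (0 : StrongDual ℝ X) 1) :=
      TopologicalSpace.IsSeparable.iUnion fun q =>
        hsep.image (continuous_const_smul ((q : ℝ)))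
    refine h1.closure.mono ?_
    intro g _
    -- pick a direction of norm one representing `g`
    obtain ⟨e, he, hge⟩ : ∃ e : StrongDual ℝ X, ‖e‖ = 1 ∧ g = ‖g‖ • e := by
      by_cases hg : g = 0
      · obtain ⟨e, he⟩ := exists_norm_eq (StrongDual ℝ X) (zero_le_one)
        exact ⟨e, he, by simp [hg]⟩
      · refine ⟨‖g‖⁻¹ • g, ?_, ?_⟩
        · rw [norm_smul, norm_inv, norm_norm, inv_mul_cancel₀ (norm_ne_zero_iff.2 hg)]
        · rw [smul_smul, mul_inv_cancel₀ (norm_ne_zero_iff.2 hg), one_smul]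
    rw [mem_closure_iff_seq_limit]
    have hq : ∀ n : ℕ, ∃ q : ℚ, |‖g‖ - (q : ℝ)| < ((n : ℝ) + 1)⁻¹ := fun n =>
      exists_rat_near ‖g‖ (by positivity)
    choose q hqn using hq
    refine ⟨fun n => (q n : ℝ) • e, ?_, ?_⟩
    · intro n
      exact Set.mem_iUnion.2 ⟨q n, ⟨e, by simp [he], rfl⟩⟩
    · rw [hge]
      have hql : Tendsto (fun n => (q n : ℝ)) atTop (𝓝 ‖g‖) := by
        rw [tendsto_iff_dist_tendsto_zero]
        apply squeeze_zero (fun n => dist_nonneg) (fun n => ?_)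
            tendsto_one_div_add_atTop_nhds_zero_nat
        rw [Real.dist_eq, abs_sub_comm, one_div]
        exact (hqn n).le
      exact hql.smul_const e
  -- extract an uncountable ε-separated subset of the sphere
  obtain ⟨ε, hε, A, hAs, hApair, hAunc⟩ := aux_exists_uncountable_separated hsph
  -- a dense sequence in X
  have : Nonempty X := ⟨0⟩
  set u : ℕ → X := TopologicalSpace.denseSeq X with hu
  have hud : DenseRange u := TopologicalSpace.denseRange_denseSeq X
  -- embed the dual into ℕ → ℝ via evaluation on the dense sequence
  set φ : StrongDual ℝ X → (ℕ → ℝ) := fun f k => f (u k) with hφ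
  have hφinj : Function.Injective φ := by
    intro f g hfg
    have h1 : (f : X → ℝ) = g :=
      hud.equalizer f.continuous g.continuous (funext fun k => congrFun hfg k)
    exact DFunLike.coe_injective h1
  have hφA : ¬ (φ '' A).Countable := by
    intro h
    exact hAunc ((h.preimage hφinj).mono (Set.subset_preimage_image φ A))
  obtain ⟨y, hyA, hy⟩ := aux_exists_closure_point hφA
  obtain ⟨f, hfA, rfl⟩ := hyA
  obtain ⟨z, hz, hzy⟩ := mem_closure_iff_seq_limit.1 hy
  -- pull the sequence back to A
  have hzmem : ∀ n, ∃ g : StrongDual ℝ X, g ∈ A ∧ φ g = z n ∧ g ≠ f := by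
    intro n
    obtain ⟨⟨g, hgA, hgz⟩, hne⟩ := hz n
    exact ⟨g, hgA, hgz, fun hgf => hne (by rw [← hgz, hgf]; rfl)⟩
  choose g hgA hgz hgne using hzmem
  -- norms
  have hfn : ‖f‖ = 1 := mem_sphere_zero_iff_norm.1 (hAs hfA)
  have hgn : ∀ n, ‖g n‖ = 1 := fun n => mem_sphere_zero_iff_norm.1 (hAs (hgA n))
  have hsep : ∀ n, ε ≤ ‖g n - f‖ := by
    intro n
    have := hApair (hgA n) hfA (hgne n)
    simpa only [dist_eq_norm] using this
  have hbound : ∀ n, ‖g n - f‖ ≤ 2 := fun n => by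
    calc ‖g n - f‖ ≤ ‖g n‖ + ‖f‖ := norm_sub_le _ _
    _ = 2 := by rw [hfn, hgn n]; norm_num
  -- coordinate convergence
  have hcoord : ∀ k, Tendsto (fun n => g n (u k)) atTop (𝓝 (f (u k))) := by
    intro k
    have := (tendsto_pi_nhds.1 hzy) k
    simpa [← hgz] using this
  -- the sequence g n - f is weak-star null
  have hnull : ∀ x : X, Tendsto (fun n => (g n - f) x) atTop (𝓝 0) := by
    intro x
    rw [NormedAddCommGroup.tendsto_nhds_zero]
    intro δ hδ
    obtain ⟨k, hk⟩ := hud.exists_dist_lt x (show (0:ℝ) < δ/4 by linarith)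
    rw [dist_eq_norm] at hk
    have hptk : Tendsto (fun n => g n (u k) - f (u k)) atTop (𝓝 0) := by
      simpa using (hcoord k).sub (tendsto_const_nhds (x := f (u k)))
    rw [NormedAddCommGroup.tendsto_nhds_zero] at hptk
    filter_upwards [hptk (δ/2) (by linarith)] with n hn
    have heq : (g n - f) x = (g n - f) (u k) + (g n - f) (x - u k) := by
      rw [map_sub (g n - f) x (u k)]; ring
    have h2 : ‖(g n - f) (x - u k)‖ ≤ 2 * (δ/4) := by
      calc ‖(g n - f) (x - u k)‖ ≤ ‖g n - f‖ * ‖x - u k‖ :=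
            (g n - f).le_opNorm _
      _ ≤ 2 * (δ/4) := by
          apply mul_le_mul (hbound n) hk.le (norm_nonneg _) (by norm_num)
    have h1 : ‖(g n - f) (u k)‖ < δ/2 := by
      simpa using hn
    calc ‖(g n - f) x‖ ≤ ‖(g n - f) (u k)‖ + ‖(g n - f) (x - u k)‖ := by
          rw [heq]; exact norm_add_le _ _
    _ < δ := by linarith
  -- apply the Kadec-Klee property
  have key := hLKK f (fun n => g n - f) hnull
  have hconst : (fun n => ‖f + (g n - f)‖) = fun _ : ℕ => (1 : ℝ) := by
    funext n
    rw [add_sub_cancel, hgn n]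
  rw [hconst, limsup_const] at key
  have hbdd : IsBoundedUnder (· ≤ ·) atTop (fun n => ‖g n - f‖) :=
    isBoundedUnder_of ⟨2, fun n => hbound n⟩
  have hlow : ε ≤ limsup (fun n => ‖g n - f‖) atTop :=
    le_limsup_of_frequently_le (Frequently.of_forall hsep) hbdd
  have : c * ε ≤ c * limsup (fun n => ‖g n - f‖) atTop :=
    mul_le_mul_of_nonneg_left hlow hc0.le
  have hce : 0 < c * ε := mul_pos hc0 hε
  rw [hfn] at key
  linarith
end

section
/- (Gorelik's Principle) Let E and X be Banach spaces and U : E → X a homeomorphism onto X whose inverse U⁻¹ is uniformly continuous. Let b, d > 0 and let E₀ be a closed finite-codimensional subspace of E. Assume that d > ω(U⁻¹, b), where ω denotes the modulus of uniform continuity, and assume Gorelik's lemma: for every ε > 0 there exists a compact set A ⊆ d·B_E such that every continuous map Φ : A → E with ‖Φ(a) − a‖ < (1−ε)d for all a ∈ A satisfies Φ(A) ∩ E₀ ≠ ∅. Then there exists a compact subset K of X such that b·B_X ⊆ K + U(2d·B_{E₀}). -/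
open Filter Topology Metric Set
open scoped Pointwise

/-- Chaining lemma: if `f` moves points at distance `≤ δ` by at most `1`, then it moves
points at distance `≤ n·δ` by at most `n`. -/
lemma stmt4_aux {X E : Type*} [NormedAddCommGroup X] [NormedSpace ℝ X] [NormedAddCommGroup E]
    (f : X → E) (δ : ℝ) (hδ : 0 < δ) (h : ∀ u v : X, ‖u - v‖ ≤ δ → ‖f u - f v‖ ≤ 1) :
    ∀ n : ℕ, ∀ u v : X, ‖u - v‖ ≤ n * δ → ‖f u - f v‖ ≤ n := by
  intro n
  induction n with
  | zero =>
    intro u v h0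
    simp only [Nat.cast_zero, zero_mul] at h0
    have huv : u = v := by
      have h1 := norm_nonneg (u - v)
      have : ‖u - v‖ = 0 := le_antisymm h0 h1
      simpa [sub_eq_zero] using this
    simp [huv]
  | succ n ih =>
    intro u v hle
    by_cases hc : ‖u - v‖ ≤ δ
    · have := h u v hc
      have hn : (0:ℝ) ≤ n := n.cast_nonneg
      push_cast
      linarith
    · push_neg at hc
      have hnorm : 0 < ‖u - v‖ := hδ.trans hc
      set z := u - (δ / ‖u - v‖) • (u - v) with hz
      have h1 : ‖u - z‖ = δ := by
        have huz : u - z = (δ / ‖u - v‖) • (u - v) := by rw [hz]; abel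
        rw [huz, norm_smul, Real.norm_eq_abs, abs_of_pos (div_pos hδ hnorm)]
        field_simp
      have h2 : ‖z - v‖ = ‖u - v‖ - δ := by
        have hzv : z - v = (1 - δ / ‖u - v‖) • (u - v) := by
          rw [hz, sub_smul, one_smul]; abel
        rw [hzv, norm_smul, Real.norm_eq_abs]
        have hlt : δ / ‖u - v‖ < 1 := (div_lt_one hnorm).mpr hc
        rw [abs_of_pos (by linarith)]
        field_simp
      have hzv : ‖z - v‖ ≤ n * δ := by
        rw [h2]
        push_cast at hle ⊢
        linarith
      have t1 := h u z h1.le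
      have t2 := ih z v hzv
      calc ‖f u - f v‖ ≤ ‖f u - f z‖ + ‖f z - f v‖ := by
            simpa using norm_sub_le_norm_sub_add_norm_sub (f u) (f z) (f v)
        _ ≤ 1 + n := add_le_add t1 t2
        _ = ((n+1 : ℕ) : ℝ) := by push_cast; ring

/-- Gorelik's Principle.  Let `E` and `X` be Banach spaces and `U : E → X` a homeomorphism
onto `X` whose inverse is uniformly continuous.  Let `b, d > 0` and let `E₀` be a closed
finite-codimensional subspace of `E`.  Assume `d > ω(U⁻¹, b)` and assume Gorelik's lemma:
for every `ε > 0` there is a compact `A ⊆ d⬝B_E` such that every continuous `Φ : A → E` with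
`‖Φ a − a‖ < (1−ε)d` on `A` satisfies `Φ(A) ∩ E₀ ≠ ∅`.  Then there is a compact `K ⊆ X` with
`b⬝B_X ⊆ K + U(2d⬝B_{E₀})`. -/
theorem stmt4 {E X : Type*} [NormedAddCommGroup E] [NormedSpace ℝ E] [CompleteSpace E]
    [NormedAddCommGroup X] [NormedSpace ℝ X] [CompleteSpace X]
    (U : E ≃ₜ X) (hunif : UniformContinuous U.symm)
    (b d : ℝ) (hb : 0 < b) (hd : 0 < d)
    (E₀ : Submodule ℝ E) (hE₀closed : IsClosed (E₀ : Set E))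
    (hE₀cofin : FiniteDimensional ℝ (E ⧸ E₀))
    (hmod : sSup {r : ℝ | ∃ x₁ x₂ : X, ‖x₁ - x₂‖ ≤ b ∧ r = ‖U.symm x₁ - U.symm x₂‖} < d)
    (hGorelik : ∀ ε > (0 : ℝ), ∃ A : Set E, IsCompact A ∧ A ⊆ ball (0 : E) d ∧
      ∀ Φ : E → E, ContinuousOn Φ A → (∀ a ∈ A, ‖Φ a - a‖ < (1 - ε) * d) →
        ∃ a ∈ A, Φ a ∈ E₀) :
    ∃ K : Set X, IsCompact K ∧
      ball (0 : X) b ⊆ K + U '' {e : E | e ∈ E₀ ∧ ‖e‖ < 2 * d} := by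
  set S := {r : ℝ | ∃ x₁ x₂ : X, ‖x₁ - x₂‖ ≤ b ∧ r = ‖U.symm x₁ - U.symm x₂‖} with hS
  -- S is bounded above
  obtain ⟨δ, hδpos, hδ⟩ := Metric.uniformContinuous_iff.mp hunif 1 one_pos
  have hkey : ∀ u v : X, ‖u - v‖ ≤ δ / 2 → ‖U.symm u - U.symm v‖ ≤ 1 := by
    intro u v huv
    have : dist u v < δ := by
      rw [dist_eq_norm]; linarith
    have h2 := hδ this
    rw [dist_eq_norm] at h2
    exact h2.le
  set n : ℕ := ⌈b / (δ / 2)⌉₊ with hn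
  have hbn : b ≤ n * (δ / 2) := by
    have := Nat.le_ceil (b / (δ / 2))
    calc b = b / (δ / 2) * (δ / 2) := by field_simp
      _ ≤ n * (δ / 2) := by
        apply mul_le_mul_of_nonneg_right this (by linarith)
  have hBdd : BddAbove S := by
    refine ⟨n, ?_⟩
    rintro r ⟨x₁, x₂, hx, rfl⟩
    exact stmt4_aux U.symm (δ / 2) (by linarith) hkey n x₁ x₂ (hx.trans hbn)
  -- choose ε
  set s := sSup S with hs
  have hs0 : (0:ℝ) ≤ s := le_csSup hBdd ⟨0, 0, by simp [hb.le]⟩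
  set ε := (d - s) / (2 * d) with hε
  have hεpos : 0 < ε := div_pos (by linarith) (by linarith)
  obtain ⟨A, hAcomp, hAball, hAprop⟩ := hGorelik ε hεpos
  refine ⟨(fun a => -(U a)) '' A, hAcomp.image (U.continuous.neg), ?_⟩
  intro x hx
  rw [mem_ball, dist_zero_right] at hx
  -- apply the Gorelik hypothesis to Φ a = U⁻¹(U a + x)
  set Φ : E → E := fun a => U.symm (U a + x) with hΦ
  have hΦcont : ContinuousOn Φ A :=
    (U.symm.continuous.comp (U.continuous.add continuous_const)).continuousOn
  have hΦbound : ∀ a ∈ A, ‖Φ a - a‖ < (1 - ε) * d := by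
    intro a _
    have hmem : ‖Φ a - a‖ ∈ S := by
      refine ⟨U a + x, U a, by simpa using hx.le, ?_⟩
      rw [hΦ]
      simp
    have hle : ‖Φ a - a‖ ≤ s := le_csSup hBdd hmem
    have h1ε : (1 - ε) * d = (d + s) / 2 := by
      rw [hε]; field_simp; ring
    rw [h1ε]
    linarith
  obtain ⟨a, haA, haE₀⟩ := hAprop Φ hΦcont hΦbound
  have hanorm : ‖a‖ < d := by simpa using hAball haA
  have heq : U (Φ a) = U a + x := by rw [hΦ]; simp
  refine Set.mem_add.mpr ⟨-(U a), ⟨a, haA, rfl⟩, U (Φ a), ⟨Φ a, ⟨haE₀, ?_⟩, rfl⟩, ?_⟩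
  · have h1 := hΦbound a haA
    have : ‖Φ a‖ ≤ ‖Φ a - a‖ + ‖a‖ := by
      simpa using norm_add_le (Φ a - a) a
    have hεd : (1 - ε) * d < d := by
      nlinarith
    linarith
  · rw [heq]; abel
end

section
/- Let U : E → X be a Lipschitz isomorphism between Banach spaces (U bijective, U and U⁻¹ Lipschitz). Define, for x* ∈ X*, |||x*||| = sup{ |x*(Ue − Ue′)| / ‖e − e′‖ : e, e′ ∈ E, e ≠ e′ }. Then ||| · ||| is a norm on X* equivalent to the dual norm, and it is lower semicontinuous with respect to the weak-star topology on X*; consequently it is the dual norm of an equivalent norm on X. -/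
open Filter Topology NormedSpace
open scoped NNReal
open Metric

/-- Let `U : E → X` be a Lipschitz isomorphism between Banach spaces.  Define, for `x* ∈ X*`,
`|||x*||| = sup { |x*(Ue − Ue′)| / ‖e − e′‖ : e ≠ e′ }`.  Then `||| ⬝ |||` is a norm on `X*`
equivalent to the dual norm, it is weak-star lower semicontinuous, and consequently it is the
dual norm of an equivalent norm on `X`. -/
theorem stmt6 {E X : Type*} [NormedAddCommGroup E] [NormedSpace ℝ E] [CompleteSpace E]
    [NormedAddCommGroup X] [NormedSpace ℝ X] [CompleteSpace X]
    (U : E → X) (hbij : Function.Bijective U)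
    (KU KV : ℝ≥0) (hU : LipschitzWith KU U) (hV : LipschitzWith KV (Function.invFun U))
    (N : StrongDual ℝ X → ℝ)
    (hN : ∀ f : StrongDual ℝ X,
      N f = sSup {r : ℝ | ∃ e e' : E, e ≠ e' ∧ r = |f (U e - U e')| / ‖e - e'‖}) :
    (∀ f g : StrongDual ℝ X, N (f + g) ≤ N f + N g) ∧
    (∀ (a : ℝ) (f : StrongDual ℝ X), N (a • f) = |a| * N f) ∧
    (∀ f : StrongDual ℝ X, N f = 0 ↔ f = 0) ∧
    (∃ c C : ℝ, 0 < c ∧ 0 < C ∧ ∀ f : StrongDual ℝ X, c * ‖f‖ ≤ N f ∧ N f ≤ C * ‖f‖) ∧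
    LowerSemicontinuous (fun φ : WeakDual ℝ X => N (WeakDual.toStrongDual φ)) ∧
    (∃ g : X → ℝ, (∀ x y : X, g (x + y) ≤ g x + g y) ∧
      (∀ (a : ℝ) (x : X), g (a • x) = |a| * g x) ∧
      (∃ c C : ℝ, 0 < c ∧ 0 < C ∧ ∀ x : X, c * ‖x‖ ≤ g x ∧ g x ≤ C * ‖x‖) ∧
      ∀ f : StrongDual ℝ X, N f = sSup {r : ℝ | ∃ x : X, g x ≤ 1 ∧ r = f x}) := by
  rcases subsingleton_or_nontrivial E with hE | hE
  · -- degenerate case : E, hence X, is trivial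
    have hXsub : Subsingleton X := hbij.2.subsingleton
    have hf0 : ∀ f : StrongDual ℝ X, f = 0 := by
      intro f; ext x; rw [Subsingleton.elim x 0, map_zero]; rfl
    have hNf : ∀ f : StrongDual ℝ X, N f = 0 := by
      intro f
      rw [hN]
      convert Real.sSup_empty using 2
      rw [Set.eq_empty_iff_forall_notMem]
      rintro r ⟨e, e', he, -⟩
      exact he (Subsingleton.elim e e')
    refine ⟨?_, ?_, ?_, ?_, ?_, ?_⟩
    · intro f g; simp [hNf]
    · intro a f; simp [hNf]
    · intro f; simp [hNf, hf0 f]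
    · refine ⟨1, 1, one_pos, one_pos, fun f => ?_⟩
      rw [hNf, hf0 f]; simp
    · simp only [hNf]; exact lowerSemicontinuous_const
    · refine ⟨fun x => ‖x‖, fun x y => norm_add_le x y,
        fun a x => by show ‖a • x‖ = |a| * ‖x‖; rw [norm_smul]; rfl,
        ⟨1, 1, one_pos, one_pos, fun x => by simp⟩, fun f => ?_⟩
      have hset : {r : ℝ | ∃ x : X, ‖x‖ ≤ 1 ∧ r = f x} = {0} := by
        ext r
        constructor
        · rintro ⟨x, -, rfl⟩
          rw [hf0 f]; rfl
        · rintro rfl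
          exact ⟨0, by simp⟩
      rw [hNf, hset, csSup_singleton]
  -- main case
  obtain ⟨e₀, e₁, hee⟩ := exists_pair_ne E
  have hlinv : ∀ e : E, Function.invFun U (U e) = e :=
    Function.leftInverse_invFun hbij.1
  have hrinv : ∀ x : X, U (Function.invFun U x) = x :=
    Function.rightInverse_invFun hbij.2
  -- distance estimates
  have hUlip : ∀ e e' : E, ‖U e - U e'‖ ≤ (KU : ℝ) * ‖e - e'‖ := by
    intro e e'
    have := hV      -- dummy
    have h := hU.dist_le_mul e e'
    rwa [dist_eq_norm, dist_eq_norm] at h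
  have hVlip : ∀ x y : X, ‖Function.invFun U x - Function.invFun U y‖ ≤ (KV : ℝ) * ‖x - y‖ := by
    intro x y
    have h := hV.dist_le_mul x y
    rwa [dist_eq_norm, dist_eq_norm] at h
  have hKVpos : (0 : ℝ) < KV := by
    have h1 : (0 : ℝ) < ‖e₀ - e₁‖ := by
      rw [norm_pos_iff, sub_ne_zero]; exact hee
    have h2 := hVlip (U e₀) (U e₁)
    rw [hlinv, hlinv] at h2
    nlinarith [norm_nonneg (U e₀ - U e₁)]
  -- basic facts about the sets S f
  set S : StrongDual ℝ X → Set ℝ :=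
    fun f => {r : ℝ | ∃ e e' : E, e ≠ e' ∧ r = |f (U e - U e')| / ‖e - e'‖} with hS
  have hSnonneg : ∀ f : StrongDual ℝ X, ∀ r ∈ S f, 0 ≤ r := by
    rintro f r ⟨e, e', he, rfl⟩
    positivity
  have hSbdd : ∀ f : StrongDual ℝ X, ∀ r ∈ S f, r ≤ (KU : ℝ) * ‖f‖ := by
    rintro f r ⟨e, e', he, rfl⟩
    have hn : (0 : ℝ) < ‖e - e'‖ := by rw [norm_pos_iff, sub_ne_zero]; exact he
    rw [div_le_iff₀ hn]
    have h1 : |f (U e - U e')| ≤ ‖f‖ * ‖U e - U e'‖ := f.le_opNorm _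
    have h2 := hUlip e e'
    nlinarith [norm_nonneg f, abs_nonneg (f (U e - U e'))]
  have hSbddAbove : ∀ f : StrongDual ℝ X, BddAbove (S f) := fun f => ⟨_, hSbdd f⟩
  have hSne : ∀ f : StrongDual ℝ X, (S f).Nonempty :=
    fun f => ⟨_, e₀, e₁, hee, rfl⟩
  have hNnonneg : ∀ f : StrongDual ℝ X, 0 ≤ N f := by
    intro f; rw [hN]; exact Real.sSup_nonneg (hSnonneg f)
  have hmemle : ∀ f : StrongDual ℝ X, ∀ r ∈ S f, r ≤ N f := by
    intro f r hr; rw [hN]; exact le_csSup (hSbddAbove f) hr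
  have hNle : ∀ f : StrongDual ℝ X, N f ≤ (KU : ℝ) * ‖f‖ := by
    intro f; rw [hN]
    exact Real.sSup_le (hSbdd f) (by positivity)
  -- triangle inequality
  have htri : ∀ f g : StrongDual ℝ X, N (f + g) ≤ N f + N g := by
    intro f g
    rw [hN (f + g)]
    refine Real.sSup_le ?_ (add_nonneg (hNnonneg f) (hNnonneg g))
    rintro r ⟨e, e', he, rfl⟩
    have hn : (0 : ℝ) < ‖e - e'‖ := by rw [norm_pos_iff, sub_ne_zero]; exact he
    have h1 : |(f + g) (U e - U e')| / ‖e - e'‖ ≤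
        |f (U e - U e')| / ‖e - e'‖ + |g (U e - U e')| / ‖e - e'‖ := by
      rw [← add_div, div_le_div_iff_of_pos_right hn]
      exact (abs_add_le _ _).trans_eq' (by rw [ContinuousLinearMap.add_apply])
    exact h1.trans (add_le_add (hmemle f _ ⟨e, e', he, rfl⟩) (hmemle g _ ⟨e, e', he, rfl⟩))
  -- homogeneity
  have hsmulmem : ∀ (a : ℝ) (f : StrongDual ℝ X) (e e' : E), e ≠ e' →
      |(a • f) (U e - U e')| / ‖e - e'‖ = |a| * (|f (U e - U e')| / ‖e - e'‖) := by
    intro a f e e' he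
    rw [ContinuousLinearMap.smul_apply, smul_eq_mul, abs_mul, mul_div_assoc]
  have hhom : ∀ (a : ℝ) (f : StrongDual ℝ X), N (a • f) = |a| * N f := by
    intro a f
    rcases eq_or_ne a 0 with rfl | ha
    · simp only [abs_zero, zero_mul]
      refine le_antisymm ?_ (hNnonneg _)
      rw [hN]
      refine Real.sSup_le ?_ le_rfl
      rintro r ⟨e, e', he, rfl⟩
      rw [hsmulmem 0 f e e' he]
      simp
    · have habs : (0 : ℝ) < |a| := abs_pos.2 ha
      refine le_antisymm ?_ ?_
      · rw [hN (a • f)]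
        refine Real.sSup_le ?_ (mul_nonneg (abs_nonneg a) (hNnonneg f))
        rintro r ⟨e, e', he, rfl⟩
        rw [hsmulmem a f e e' he]
        exact mul_le_mul_of_nonneg_left (hmemle f _ ⟨e, e', he, rfl⟩) (abs_nonneg a)
      · rw [← le_div_iff₀' habs]
        rw [hN f]
        refine Real.sSup_le ?_ (div_nonneg (hNnonneg _) habs.le)
        rintro r ⟨e, e', he, rfl⟩
        rw [le_div_iff₀' habs, ← hsmulmem a f e e' he]
        exact hmemle (a • f) _ ⟨e, e', he, rfl⟩
  -- lower bound
  have hlow : ∀ f : StrongDual ℝ X, ‖f‖ ≤ (KV : ℝ) * N f := by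
    intro f
    refine f.opNorm_le_bound (mul_nonneg hKVpos.le (hNnonneg f)) ?_
    intro x
    rcases eq_or_ne x 0 with rfl | hx
    · simp
    · set e := Function.invFun U x with hedef
      set e' := Function.invFun U 0 with he'def
      have hUe : U e = x := hrinv x
      have hUe' : U e' = (0 : X) := hrinv 0
      have he : e ≠ e' := by
        intro h
        apply hx
        rw [← hUe, h, hUe']
      have hn : (0 : ℝ) < ‖e - e'‖ := by rw [norm_pos_iff, sub_ne_zero]; exact he
      have hd : ‖e - e'‖ ≤ (KV : ℝ) * ‖x‖ := by
        have := hVlip x 0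
        rwa [sub_zero, ← hedef, ← he'def] at this
      have hr : |f (U e - U e')| / ‖e - e'‖ ≤ N f := hmemle f _ ⟨e, e', he, rfl⟩
      rw [div_le_iff₀ hn] at hr
      rw [hUe, hUe', sub_zero] at hr
      have := hNnonneg f
      calc ‖f x‖ = |f x| := (Real.norm_eq_abs _)
        _ ≤ N f * ‖e - e'‖ := hr
        _ ≤ N f * ((KV : ℝ) * ‖x‖) := by nlinarith
        _ = (KV : ℝ) * N f * ‖x‖ := by ring
  -- the equivalence
  have hequiv : ∃ c C : ℝ, 0 < c ∧ 0 < C ∧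
      ∀ f : StrongDual ℝ X, c * ‖f‖ ≤ N f ∧ N f ≤ C * ‖f‖ := by
    refine ⟨(KV : ℝ)⁻¹, (KU : ℝ) + 1, inv_pos.2 hKVpos, by positivity, fun f => ⟨?_, ?_⟩⟩
    · rw [inv_mul_le_iff₀ hKVpos]
      exact hlow f
    · exact (hNle f).trans (by nlinarith [norm_nonneg f])
  -- definiteness
  have hdef : ∀ f : StrongDual ℝ X, N f = 0 ↔ f = 0 := by
    intro f
    constructor
    · intro h
      have h1 := hlow f
      rw [h, mul_zero] at h1
      exact norm_le_zero_iff.1 h1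
    · rintro rfl
      refine le_antisymm ?_ (hNnonneg 0)
      rw [hN]
      refine Real.sSup_le ?_ le_rfl
      rintro r ⟨e, e', he, rfl⟩
      simp
  -- lower semicontinuity
  have hlsc : LowerSemicontinuous (fun φ : WeakDual ℝ X => N (WeakDual.toStrongDual φ)) := by
    intro φ y hy
    rcases lt_or_ge y 0 with hy0 | hy0
    · exact Filter.Eventually.of_forall fun ψ => hy0.trans_le (hNnonneg _)
    · simp only [hN] at hy
      obtain ⟨r, hr, hyr⟩ := exists_lt_of_lt_csSup (hSne _) hy
      obtain ⟨e, e', he, rfl⟩ := hr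
      have hcont : Continuous fun ψ : WeakDual ℝ X => |ψ (U e - U e')| / ‖e - e'‖ :=
        ((WeakDual.eval_continuous (U e - U e')).abs).div_const _
      have hopen : IsOpen {ψ : WeakDual ℝ X | y < |ψ (U e - U e')| / ‖e - e'‖} :=
        isOpen_lt continuous_const hcont
      filter_upwards [hopen.mem_nhds hyr] with ψ hψ
      exact hψ.trans_le (hmemle (WeakDual.toStrongDual ψ) _ ⟨e, e', he, rfl⟩)
  refine ⟨htri, hhom, hdef, hequiv, hlsc, ?_⟩
  -- construction of the predual norm
  set D : Set X := {x | ∃ e e' : E, e ≠ e' ∧ x = ‖e - e'‖⁻¹ • (U e - U e')} with hD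
  set K : Set X := closure (convexHull ℝ D) with hK
  have hKconv : Convex ℝ K := (convex_convexHull ℝ D).closure
  have hKclosed : IsClosed K := isClosed_closure
  have hDK : D ⊆ K := (subset_convexHull ℝ D).trans subset_closure
  have hDsymm : ∀ x ∈ D, -x ∈ D := by
    rintro x ⟨e, e', he, rfl⟩
    refine ⟨e', e, he.symm, ?_⟩
    rw [norm_sub_rev, ← smul_neg, neg_sub]
  have hKsymm : ∀ x ∈ K, -x ∈ K := by
    have hsub : K ⊆ -K := by
      refine closure_minimal (convexHull_min ?_ hKconv.neg) hKclosed.neg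
      intro d hd
      rw [Set.mem_neg]
      exact hDK (hDsymm d hd)
    intro x hx
    have := hsub hx
    rwa [Set.mem_neg] at this
  -- D is bounded by KU
  have hDbound : D ⊆ closedBall (0 : X) (KU : ℝ) := by
    rintro x ⟨e, e', he, rfl⟩
    have hn : (0 : ℝ) < ‖e - e'‖ := by rw [norm_pos_iff, sub_ne_zero]; exact he
    rw [mem_closedBall_zero_iff, norm_smul, Real.norm_eq_abs, abs_inv, abs_norm]
    rw [inv_mul_le_iff₀ hn]
    rw [mul_comm]
    exact hUlip e e'
  have hKbound : K ⊆ closedBall (0 : X) (KU : ℝ) :=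
    closure_minimal (convexHull_min hDbound (convex_closedBall _ _)) Metric.isClosed_closedBall
  -- K contains 0
  have h0K : (0 : X) ∈ K := by
    have hd : (‖e₀ - e₁‖⁻¹ • (U e₀ - U e₁)) ∈ D := ⟨e₀, e₁, hee, rfl⟩
    have := hKconv (hDK hd) (hKsymm _ (hDK hd))
      (by norm_num : (0:ℝ) ≤ 1/2) (by norm_num : (0:ℝ) ≤ 1/2) (by norm_num)
    simpa [smul_neg] using this
  -- K contains a ball
  have hball : ball (0 : X) ((KV : ℝ)⁻¹) ⊆ K := by
    intro x hx
    rw [mem_ball_zero_iff] at hx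
    rcases eq_or_ne x 0 with rfl | hxne
    · exact h0K
    · set e := Function.invFun U x with hedef
      set e' := Function.invFun U 0 with he'def
      have hUe : U e = x := hrinv x
      have hUe' : U e' = (0 : X) := hrinv 0
      have he : e ≠ e' := by
        intro h; exact hxne (by rw [← hUe, h, hUe'])
      have hn : (0 : ℝ) < ‖e - e'‖ := by rw [norm_pos_iff, sub_ne_zero]; exact he
      have hnle : ‖e - e'‖ ≤ (KV : ℝ) * ‖x‖ := by
        have := hVlip x 0
        rwa [sub_zero, ← hedef, ← he'def] at this
      have hn1 : ‖e - e'‖ < 1 := by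
        calc ‖e - e'‖ ≤ (KV : ℝ) * ‖x‖ := hnle
          _ < (KV : ℝ) * (KV : ℝ)⁻¹ := by
              exact mul_lt_mul_of_pos_left hx hKVpos
          _ = 1 := mul_inv_cancel₀ hKVpos.ne'
      have hd : (‖e - e'‖⁻¹ • (U e - U e')) ∈ D := ⟨e, e', he, rfl⟩
      have hcomb := hKconv (hDK hd) h0K hn.le (by linarith : (0:ℝ) ≤ 1 - ‖e - e'‖)
        (by ring)
      rw [smul_zero, add_zero, smul_smul, mul_inv_cancel₀ hn.ne', one_smul,
        hUe, hUe', sub_zero] at hcomb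
      exact hcomb
  have hKnhds : K ∈ 𝓝 (0 : X) :=
    Filter.mem_of_superset (ball_mem_nhds 0 (inv_pos.2 hKVpos)) hball
  have hKabs : Absorbent ℝ K := absorbent_nhds_zero hKnhds
  -- membership characterisation
  have hmemK : ∀ x : X, gauge K x ≤ 1 ↔ x ∈ K := by
    intro x
    rw [gauge_le_one_iff_mem_closure hKconv hKnhds, hKclosed.closure_eq]
  -- translation between S f and values on D
  have hdval : ∀ (f : StrongDual ℝ X) (e e' : E), e ≠ e' →
      |f (‖e - e'‖⁻¹ • (U e - U e'))| = |f (U e - U e')| / ‖e - e'‖ := by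
    intro f e e' he
    have hn : (0 : ℝ) < ‖e - e'‖ := by rw [norm_pos_iff, sub_ne_zero]; exact he
    rw [map_smul, smul_eq_mul, abs_mul, abs_inv, abs_norm, inv_mul_eq_div]
  refine ⟨gauge K, fun x y => gauge_add_le hKconv hKabs x y, ?_, ?_, ?_⟩
  · -- homogeneity of the gauge
    intro a x
    rcases le_or_gt 0 a with ha | ha
    · rw [gauge_smul_of_nonneg ha, smul_eq_mul, abs_of_nonneg ha]
    · have h1 : a • x = -((-a) • x) := by rw [neg_smul, neg_neg]
      rw [h1, gauge_neg hKsymm, gauge_smul_of_nonneg (by linarith : (0:ℝ) ≤ -a),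
        smul_eq_mul, abs_of_neg ha]
  · -- equivalence with the norm
    refine ⟨((KU : ℝ) + 1)⁻¹, (KV : ℝ), by positivity, hKVpos, fun x => ⟨?_, ?_⟩⟩
    · have h1 : ‖x‖ / ((KU : ℝ) + 1) ≤ gauge K x :=
        le_gauge_of_subset_closedBall hKabs (by positivity)
          (hKbound.trans (closedBall_subset_closedBall (by linarith [KU.coe_nonneg])))
      calc ((KU : ℝ) + 1)⁻¹ * ‖x‖ = ‖x‖ / ((KU : ℝ) + 1) := by
            rw [div_eq_inv_mul]
        _ ≤ gauge K x := h1
    · have h1 : gauge K x ≤ gauge (ball (0 : X) ((KV : ℝ)⁻¹)) x :=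
        gauge_mono (absorbent_nhds_zero (ball_mem_nhds 0 (inv_pos.2 hKVpos))) hball x
      calc gauge K x ≤ gauge (ball (0 : X) ((KV : ℝ)⁻¹)) x := h1
        _ = ‖x‖ / (KV : ℝ)⁻¹ := gauge_ball (by positivity) x
        _ = (KV : ℝ) * ‖x‖ := by rw [div_eq_mul_inv, inv_inv, mul_comm]
  · -- N is the dual norm of the gauge
    intro f
    set T : Set ℝ := {r : ℝ | ∃ x : X, gauge K x ≤ 1 ∧ r = f x} with hT
    have hTbdd : BddAbove T := by
      refine ⟨‖f‖ * (KU : ℝ), ?_⟩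
      rintro r ⟨x, hx, rfl⟩
      have hxK : x ∈ K := (hmemK x).1 hx
      have hxn : ‖x‖ ≤ (KU : ℝ) := by
        have := hKbound hxK
        rwa [mem_closedBall_zero_iff] at this
      calc f x ≤ |f x| := le_abs_self _
        _ ≤ ‖f‖ * ‖x‖ := f.le_opNorm x
        _ ≤ ‖f‖ * (KU : ℝ) := mul_le_mul_of_nonneg_left hxn (norm_nonneg f)
    have h0T : (0 : ℝ) ∈ T := ⟨0, by rw [gauge_zero]; norm_num, (map_zero f).symm⟩
    refine le_antisymm ?_ ?_
    · -- N f ≤ sSup T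
      rw [hN]
      refine Real.sSup_le ?_ (le_csSup hTbdd h0T)
      rintro r ⟨e, e', he, rfl⟩
      set d : X := ‖e - e'‖⁻¹ • (U e - U e') with hddef
      have hdD : d ∈ D := ⟨e, e', he, rfl⟩
      have habs : |f (U e - U e')| / ‖e - e'‖ = |f d| := (hdval f e e' he).symm
      rw [habs]
      rcases abs_cases (f d) with ⟨h1, -⟩ | ⟨h1, -⟩
      · rw [h1]
        exact le_csSup hTbdd ⟨d, (hmemK d).2 (hDK hdD), rfl⟩
      · rw [h1, ← map_neg]
        exact le_csSup hTbdd ⟨-d, (hmemK (-d)).2 (hKsymm d (hDK hdD)), rfl⟩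
    · -- sSup T ≤ N f
      refine Real.sSup_le ?_ (hNnonneg f)
      rintro r ⟨x, hx, rfl⟩
      have hxK : x ∈ K := (hmemK x).1 hx
      have hKsub : K ⊆ {y : X | f y ≤ N f} := by
        refine closure_minimal (convexHull_min ?_ ?_) ?_
        · rintro d ⟨e, e', he, rfl⟩
          have : |f (‖e - e'‖⁻¹ • (U e - U e'))| ≤ N f := by
            rw [hdval f e e' he]
            exact hmemle f _ ⟨e, e', he, rfl⟩
          exact (le_abs_self _).trans this
        · exact convex_halfSpace_le ⟨f.map_add, f.map_smul⟩ (N f)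
        · exact isClosed_le f.continuous continuous_const
      exact hKsub hxK
end

section
/- Let e be a nonzero element of a closed subspace E of c₀(ℕ), and let δ > 0. Then there exists a closed finite-codimensional subspace E₀ of E such that for every f ∈ E₀ with ‖f‖ ≤ ‖e‖, one has max(‖e + f‖, ‖e − f‖) ≤ (1 + δ)‖e‖. -/
open Filter Topology
open scoped ZeroAtInfty

private def evalN (N : ℕ) : C₀(ℕ, ℝ) →ₗ[ℝ] (Fin N → ℝ) where
  toFun f i := f (i : ℕ)
  map_add' f g := by ext i; simp
  map_smul' c f := by ext i; simp

@[simp] private lemma evalN_apply (N : ℕ) (f : C₀(ℕ, ℝ)) (i : Fin N) :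
    evalN N f i = f (i : ℕ) := rfl

private lemma aux_compl {V W : Type*} [AddCommGroup V] [Module ℝ V]
    [AddCommGroup W] [Module ℝ W] [FiniteDimensional ℝ W]
    (E : Submodule ℝ V) (ψ : V →ₗ[ℝ] W) :
    ∃ F : Submodule ℝ V, FiniteDimensional ℝ F ∧ (E ⊓ LinearMap.ker ψ) ⊔ F = E := by
  set E₀' : Submodule ℝ E := LinearMap.ker (ψ.comp E.subtype) with hE₀'
  obtain ⟨F', hF'⟩ := Submodule.exists_isCompl E₀'
  refine ⟨F'.map E.subtype, ?_, ?_⟩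
  · have hinj : Function.Injective ((ψ.comp E.subtype).comp F'.subtype) := by
      rw [← LinearMap.ker_eq_bot, LinearMap.ker_eq_bot']
      intro x hx
      have hx1 : (x : E) ∈ E₀' := hx
      have hx2 : (x : E) ∈ E₀' ⊓ F' := ⟨hx1, x.2⟩
      rw [hF'.inf_eq_bot] at hx2
      exact Subtype.ext hx2
    have : FiniteDimensional ℝ F' :=
      FiniteDimensional.of_injective ((ψ.comp E.subtype).comp F'.subtype) hinj
    exact Module.Finite.map _ _
  · have h1 : E ⊓ LinearMap.ker ψ = E₀'.map E.subtype := by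
      rw [hE₀', LinearMap.ker_comp, Submodule.map_comap_eq, Submodule.range_subtype]
    rw [h1, ← Submodule.map_sup, hF'.sup_eq_top, Submodule.map_top,
      Submodule.range_subtype]

set_option maxHeartbeats 1000000 in
set_option synthInstance.maxHeartbeats 400000 in
/-- Let `e` be a nonzero element of a closed subspace `E` of `c₀(ℕ)` and `δ > 0`.  Then there
is a closed finite-codimensional subspace `E₀` of `E` (i.e. `E₀ ≤ E` and `E₀` has a
finite-dimensional complement `F` in `E`) such that for every `f ∈ E₀` with `‖f‖ ≤ ‖e‖` one
has `max (‖e + f‖, ‖e − f‖) ≤ (1 + δ)‖e‖`. -/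
theorem stmt7 (E : Submodule ℝ C₀(ℕ, ℝ)) (hEclosed : IsClosed (E : Set C₀(ℕ, ℝ)))
    (e : C₀(ℕ, ℝ)) (heE : e ∈ E) (he : e ≠ 0) (δ : ℝ) (hδ : 0 < δ) :
    ∃ E₀ : Submodule ℝ C₀(ℕ, ℝ), E₀ ≤ E ∧ IsClosed (E₀ : Set C₀(ℕ, ℝ)) ∧
      (∃ F : Submodule ℝ C₀(ℕ, ℝ), FiniteDimensional ℝ F ∧ E₀ ⊔ F = E) ∧
      ∀ f ∈ E₀, ‖f‖ ≤ ‖e‖ → max ‖e + f‖ ‖e - f‖ ≤ (1 + δ) * ‖e‖ := by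
  have hne : 0 < ‖e‖ := norm_pos_iff.mpr he
  have hpos : 0 < δ * ‖e‖ := mul_pos hδ hne
  -- e tends to 0 at infinity
  have htend : Tendsto (fun n => e n) atTop (𝓝 0) := by
    have h := zero_at_infty e
    rwa [cocompact_eq_atTop (α := ℕ)] at h
  obtain ⟨N, hN⟩ := (Metric.tendsto_atTop.mp htend (δ * ‖e‖) hpos)
  -- pointwise bound by norm
  have hpt : ∀ (g : C₀(ℕ, ℝ)) (n : ℕ), |g n| ≤ ‖g‖ := fun g n => by
    simpa [Real.norm_eq_abs, ZeroAtInftyContinuousMap.norm_toBCF_eq_norm] using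
      g.toBCF.norm_coe_le_norm n
  -- the evaluation map onto the first N coordinates
  refine ⟨E ⊓ LinearMap.ker (evalN N), inf_le_left, ?_, ?_, ?_⟩
  · -- closedness
    have hker : IsClosed ((LinearMap.ker (evalN N) : Submodule ℝ C₀(ℕ, ℝ)) : Set C₀(ℕ, ℝ)) := by
      have : ((LinearMap.ker (evalN N) : Submodule ℝ C₀(ℕ, ℝ)) : Set C₀(ℕ, ℝ)) =
          ⋂ i : Fin N, {f : C₀(ℕ, ℝ) | f (i : ℕ) = 0} := by
        ext f
        simp only [SetLike.mem_coe, LinearMap.mem_ker, Set.mem_iInter, Set.mem_setOf_eq,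
          funext_iff, evalN_apply, Pi.zero_apply]
      rw [this]
      refine isClosed_iInter fun i => ?_
      have hcont : Continuous fun f : C₀(ℕ, ℝ) => f (i : ℕ) := by
        have : LipschitzWith 1 fun f : C₀(ℕ, ℝ) => f (i : ℕ) := by
          refine LipschitzWith.of_dist_le_mul fun f g => ?_
          have h := BoundedContinuousFunction.dist_coe_le_dist (f := f.toBCF)
            (g := g.toBCF) (i : ℕ)
          rw [ZeroAtInftyContinuousMap.dist_toBCF_eq_dist] at h
          simpa using h
        exact this.continuous
      exact isClosed_eq hcont continuous_const
    exact hEclosed.inter hker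
  · exact aux_compl E (evalN N)
  · -- the norm estimate
    intro f hf hfle
    obtain ⟨hfE, hfker⟩ := hf
    have hf0 : ∀ i : Fin N, f (i : ℕ) = 0 := fun i =>
      congrFun (LinearMap.mem_ker.mp hfker) i
    have key : ∀ (s : ℝ), |s| = 1 → ‖e + s • f‖ ≤ (1 + δ) * ‖e‖ := by
      intro s hs
      have hb : ∀ n, ‖(e + s • f) n‖ ≤ (1 + δ) * ‖e‖ := by
        intro n
        rcases lt_or_ge n N with hn | hn
        · have : f n = 0 := hf0 ⟨n, hn⟩
          simp only [ZeroAtInftyContinuousMap.add_apply, ZeroAtInftyContinuousMap.smul_apply,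
            this, smul_zero, add_zero, Real.norm_eq_abs]
          calc |e n| ≤ ‖e‖ := hpt e n
            _ ≤ (1 + δ) * ‖e‖ := by nlinarith
        · have h1 : |e n| ≤ δ * ‖e‖ := by
            have := hN n hn
            rw [Real.dist_eq, sub_zero] at this
            exact this.le
          have h2 : |s • f n| ≤ ‖e‖ := by
            rw [smul_eq_mul, abs_mul, hs, one_mul]
            exact (hpt f n).trans hfle
          simp only [ZeroAtInftyContinuousMap.add_apply, ZeroAtInftyContinuousMap.smul_apply,
            Real.norm_eq_abs]
          calc |e n + s • f n| ≤ |e n| + |s • f n| := abs_add_le _ _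
            _ ≤ δ * ‖e‖ + ‖e‖ := add_le_add h1 h2
            _ = (1 + δ) * ‖e‖ := by ring
      rw [← ZeroAtInftyContinuousMap.norm_toBCF_eq_norm]
      exact BoundedContinuousFunction.norm_le (by positivity) |>.mpr hb
    refine max_le ?_ ?_
    · simpa using key 1 (by norm_num)
    · have := key (-1) (by norm_num)
      rw [show (-1 : ℝ) • f = -f from neg_one_smul ℝ f] at this
      simpa [sub_eq_add_neg] using this
end

section
/- Every quotient of c₀(ℕ) by a closed subspace has metric weak-star Kadec-Klee quotient norm: if Y ⊆ c₀(ℕ) is a closed subspace and Q = c₀/Y carries the quotient norm, then for every q* ∈ Q* and every weak-star null sequence (qₙ*) in Q*, limsup ‖q* + qₙ*‖ ≥ ‖q*‖ + limsup ‖qₙ*‖. -/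
open Filter Topology NormedSpace
open scoped ZeroAtInfty

/-- The topological dual of a seminormed space `E` (removed from Mathlib; old meaning restored). -/
abbrev NormedSpace.Dual (𝕜 : Type*) [NontriviallyNormedField 𝕜] (E : Type*) [SeminormedAddCommGroup E]
    [NormedSpace 𝕜 E] : Type _ :=
  E →L[𝕜] 𝕜

namespace Stmt9Aux

local notation "E" => C₀(ℕ, ℝ)

lemma c0_tendsto (y : E) : Tendsto (fun i => y i) atTop (𝓝 0) := by
  have := zero_at_infty (F := C₀(ℕ, ℝ)) y
  rwa [cocompact_eq_atTop] at this

lemma c0_apply_le (f : E) (i : ℕ) : |f i| ≤ ‖f‖ := by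
  have h := BoundedContinuousFunction.norm_coe_le_norm f.toBCF i
  rwa [ZeroAtInftyContinuousMap.norm_toBCF_eq_norm] at h

lemma c0_norm_le {f : E} {C : ℝ} (hC : 0 ≤ C) (h : ∀ i, |f i| ≤ C) : ‖f‖ ≤ C := by
  rw [← ZeroAtInftyContinuousMap.norm_toBCF_eq_norm]
  exact BoundedContinuousFunction.norm_le hC |>.mpr h

/-- tail truncation -/
noncomputable def tl (N : ℕ) (y : E) : E :=
  { toFun := fun i => if N ≤ i then y i else 0
    continuous_toFun := continuous_of_discreteTopology
    zero_at_infty' := by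
      rw [cocompact_eq_atTop]
      refine squeeze_zero_norm (a := fun i => |y i|) ?_ (abs_zero (α := ℝ) ▸ (c0_tendsto y).abs)
      intro i
      by_cases h : N ≤ i <;> simp [h] }

/-- head truncation -/
noncomputable def hd (N : ℕ) (y : E) : E :=
  { toFun := fun i => if i < N then y i else 0
    continuous_toFun := continuous_of_discreteTopology
    zero_at_infty' := by
      rw [cocompact_eq_atTop]
      refine Tendsto.congr' ?_ tendsto_const_nhds
      filter_upwards [eventually_ge_atTop N] with i hi
      simp [Nat.not_lt.mpr hi] }

/-- basis vector -/
noncomputable def e (k : ℕ) : E :=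
  { toFun := fun i => if i = k then 1 else 0
    continuous_toFun := continuous_of_discreteTopology
    zero_at_infty' := by
      rw [cocompact_eq_atTop]
      refine Tendsto.congr' ?_ tendsto_const_nhds
      filter_upwards [eventually_ge_atTop (k+1)] with i hi
      simp [Nat.ne_of_gt hi] }

@[simp] lemma tl_apply (N : ℕ) (y : E) (i : ℕ) : tl N y i = if N ≤ i then y i else 0 := rfl
@[simp] lemma hd_apply (N : ℕ) (y : E) (i : ℕ) : hd N y i = if i < N then y i else 0 := rfl
@[simp] lemma e_apply (k i : ℕ) : e k i = if i = k then 1 else 0 := rfl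

lemma hd_add_tl (N : ℕ) (y : E) : hd N y + tl N y = y := by
  ext i
  rw [ZeroAtInftyContinuousMap.coe_add, Pi.add_apply]
  by_cases h : N ≤ i
  · simp [h, Nat.not_lt.mpr h]
  · simp [h, Nat.not_le.mp h]

lemma tl_neg (N : ℕ) (y : E) : tl N (-y) = -(tl N y) := by
  ext i
  by_cases h : N ≤ i <;> simp [h]

lemma mix_norm_le (N : ℕ) (u v : E) : ‖hd N u + tl N v‖ ≤ max ‖u‖ ‖v‖ := by
  apply c0_norm_le (le_trans (norm_nonneg u) (le_max_left _ _))
  intro i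
  rw [ZeroAtInftyContinuousMap.coe_add, Pi.add_apply]
  by_cases h : N ≤ i
  · simp only [tl_apply, hd_apply, h, if_true, Nat.not_lt.mpr h, if_false, zero_add]
    exact le_trans (c0_apply_le v i) (le_max_right _ _)
  · simp only [tl_apply, hd_apply, h, if_false, Nat.not_le.mp h, if_true, add_zero]
    exact le_trans (c0_apply_le u i) (le_max_left _ _)

lemma tl_norm_le (N : ℕ) (y : E) : ‖tl N y‖ ≤ ‖y‖ := by
  apply c0_norm_le (norm_nonneg y)
  intro i
  by_cases h : N ≤ i
  · simpa [h] using c0_apply_le y i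
  · simp [h]

lemma hd_norm_le (N : ℕ) (y : E) : ‖hd N y‖ ≤ ‖y‖ := by
  apply c0_norm_le (norm_nonneg y)
  intro i
  by_cases h : i < N
  · simpa [h] using c0_apply_le y i
  · simp [h]

lemma hd_succ (N : ℕ) (y : E) : hd (N+1) y = hd N y + y N • e N := by
  ext i
  rw [ZeroAtInftyContinuousMap.coe_add, Pi.add_apply, ZeroAtInftyContinuousMap.coe_smul,
    Pi.smul_apply]
  rcases lt_trichotomy i N with h | h | h
  · simp [h, Nat.lt_succ_of_lt h, Nat.ne_of_lt h]
  · subst h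
    simp [Nat.lt_succ_self, lt_irrefl]
  · have h1 : ¬ i < N := Nat.not_lt.mpr h.le
    have h2 : ¬ i < N + 1 := Nat.not_lt.mpr h
    simp [h1, h2, Nat.ne_of_gt h]

lemma hd_zero (y : E) : hd 0 y = 0 := by
  ext i; simp

lemma head_bound (g : Dual ℝ E) (N : ℕ) (y : E) (hy : ‖y‖ ≤ 1) :
    |g (hd N y)| ≤ ∑ i ∈ Finset.range N, |g (e i)| := by
  induction N with
  | zero => simp [hd_zero]
  | succ N ih =>
    rw [hd_succ, map_add, map_smul, Finset.sum_range_succ]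
    refine le_trans (abs_add_le _ _) (add_le_add ih ?_)
    rw [smul_eq_mul, abs_mul]
    calc |y N| * |g (e N)| ≤ 1 * |g (e N)| := by
          apply mul_le_mul_of_nonneg_right _ (abs_nonneg _)
          exact le_trans (c0_apply_le y N) hy
      _ = |g (e N)| := one_mul _

lemma exists_norm_le_one {G : Type*} [NormedAddCommGroup G] [NormedSpace ℝ G]
    (g : Dual ℝ G) {ε : ℝ} (hε : 0 < ε) : ∃ x : G, ‖x‖ ≤ 1 ∧ ‖g‖ - ε ≤ g x := by
  obtain ⟨x, hx1, hx2⟩ := g.exists_lt_apply_of_lt_opNorm (r := ‖g‖ - ε) (by linarith)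
  rcases le_or_gt 0 (g x) with h | h
  · refine ⟨x, hx1.le, ?_⟩
    rw [Real.norm_eq_abs, abs_of_nonneg h] at hx2
    linarith
  · refine ⟨-x, by simpa using hx1.le, ?_⟩
    rw [Real.norm_eq_abs, abs_of_neg h] at hx2
    rw [map_neg]
    linarith


lemma tail_small (g : Dual ℝ E) {ε : ℝ} (hε : 0 < ε) :
    ∃ N, ∀ y : E, ‖y‖ ≤ 1 → |g (tl N y)| ≤ ε := by
  obtain ⟨x, hx1, hx2⟩ := exists_norm_le_one g (half_pos hε)
  have hg1 : (0:ℝ) < ‖g‖ + 1 := by positivity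
  set ε' := ε / (2 * (‖g‖ + 1)) with hε'def
  have hε' : 0 < ε' := by positivity
  have hev : ∀ᶠ i in atTop, |x i| ≤ ε' := by
    filter_upwards [Metric.tendsto_nhds.mp (c0_tendsto x) ε' hε'] with i hi
    rw [Real.dist_eq, sub_zero] at hi; exact hi.le
  obtain ⟨N, hN⟩ := eventually_atTop.mp hev
  have htl : ‖tl N x‖ ≤ ε' := by
    apply c0_norm_le hε'.le
    intro i
    by_cases h : N ≤ i
    · simpa [h] using hN i h
    · simp [h, hε'.le]
  have hgtl : g (tl N x) ≤ ε / 2 := by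
    have h1 : |g (tl N x)| ≤ ‖g‖ * ‖tl N x‖ := g.le_opNorm _
    have h2 : ‖g‖ * ‖tl N x‖ ≤ ‖g‖ * ε' := by
      exact mul_le_mul_of_nonneg_left htl (norm_nonneg g)
    have h3 : (‖g‖ + 1) * ε' = ε / 2 := by
      rw [hε'def]; field_simp
    nlinarith [abs_nonneg (g (tl N x)), le_abs_self (g (tl N x)), norm_nonneg g, hε'.le]
  have claim : ∀ y : E, ‖y‖ ≤ 1 → g (tl N y) ≤ ε := by
    intro y hy
    have hz : ‖hd N x + tl N y‖ ≤ 1 := le_trans (mix_norm_le N x y) (max_le hx1 hy)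
    have h2 : g (hd N x + tl N y) ≤ ‖g‖ :=
      le_trans (le_abs_self _) (g.unit_le_opNorm _ hz)
    have h4 : g (hd N x) + g (tl N x) = g x := by rw [← map_add, hd_add_tl]
    have h5 : g (hd N x) + g (tl N y) = g (hd N x + tl N y) := (map_add g _ _).symm
    linarith
  refine ⟨N, fun y hy => abs_le.2 ⟨?_, claim y hy⟩⟩
  have := claim (-y) (by rwa [norm_neg])
  rw [tl_neg, map_neg] at this
  linarith

lemma dual_lift (Y : Submodule ℝ E) (πL : E →L[ℝ] E ⧸ Y)
    (hπ : ∀ q : E ⧸ Y, ∀ δ > (0:ℝ), ∃ x : E, πL x = q ∧ ‖x‖ < ‖q‖ + δ)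
    (f : Dual ℝ (E ⧸ Y)) {ε : ℝ} (hε : 0 < ε) :
    ∃ x : E, ‖x‖ ≤ 1 ∧ ‖f‖ - ε ≤ f (πL x) := by
  have hle : ‖f‖ ≤ ‖f.comp πL‖ := by
    refine ContinuousLinearMap.opNorm_le_bound f (ContinuousLinearMap.opNorm_nonneg _) fun q => ?_
    refine le_of_forall_pos_le_add fun δ hδ => ?_
    have hg1 : (0:ℝ) < ‖f.comp πL‖ + 1 := by positivity
    obtain ⟨m, hm1, hm2⟩ := hπ q (δ / (‖f.comp πL‖ + 1)) (by positivity)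
    have h1 : ‖f q‖ ≤ ‖f.comp πL‖ * ‖m‖ := by
      rw [← hm1]
      exact (f.comp πL).le_opNorm m
    have h2 : ‖f.comp πL‖ * ‖m‖ ≤ ‖f.comp πL‖ * (‖q‖ + δ / (‖f.comp πL‖ + 1)) :=
      mul_le_mul_of_nonneg_left hm2.le (ContinuousLinearMap.opNorm_nonneg _)
    have h3 : ‖f.comp πL‖ * (δ / (‖f.comp πL‖ + 1)) ≤ δ := by
      rw [← mul_div_assoc, div_le_iff₀ hg1]
      nlinarith [norm_nonneg (f.comp πL), hδ.le]
    rw [mul_add] at h2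
    linarith
  obtain ⟨x, hx1, hx2⟩ := exists_norm_le_one (f.comp πL) hε
  refine ⟨x, hx1, ?_⟩
  simp only [ContinuousLinearMap.comp_apply] at hx2
  linarith

end Stmt9Aux

open Stmt9Aux in
/-- Every quotient of `c₀(ℕ)` by a closed subspace, with its quotient norm, is metric
weak-star Kadec-Klee: for every `q*` in the dual of `Q = c₀/Y` and every weak-star null
sequence `(qₙ*)` in `Q*`, `limsup ‖q* + qₙ*‖ ≥ ‖q*‖ + limsup ‖qₙ*‖`. -/
theorem stmt9 (Y : Submodule ℝ C₀(ℕ, ℝ)) (hYclosed : IsClosed (Y : Set C₀(ℕ, ℝ)))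
    (qstar : Dual ℝ (C₀(ℕ, ℝ) ⧸ Y)) (qs : ℕ → Dual ℝ (C₀(ℕ, ℝ) ⧸ Y))
    (hweakstar : ∀ q : C₀(ℕ, ℝ) ⧸ Y, Tendsto (fun n => qs n q) atTop (𝓝 0)) :
    limsup (fun n => ‖qstar + qs n‖) atTop ≥ ‖qstar‖ + limsup (fun n => ‖qs n‖) atTop := by
  classical
  -- the quotient map as a continuous linear map
  let πL : C₀(ℕ, ℝ) →L[ℝ] (C₀(ℕ, ℝ) ⧸ Y) := { toLinearMap := Y.mkQ, cont := continuous_quot_mk }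
  have hπL : ∀ x : C₀(ℕ, ℝ), πL x = Submodule.Quotient.mk x := fun x => rfl
  have hπlift : ∀ q : C₀(ℕ, ℝ) ⧸ Y, ∀ δ > (0:ℝ), ∃ x : C₀(ℕ, ℝ), πL x = q ∧ ‖x‖ < ‖q‖ + δ := by
    intro q δ hδ
    obtain ⟨m, hm1, hm2⟩ := Submodule.Quotient.norm_mk_lt q hδ
    exact ⟨m, by rw [hπL]; exact hm1, hm2⟩
  have hπnorm : ∀ x : C₀(ℕ, ℝ), ‖πL x‖ ≤ ‖x‖ := fun x => by
    rw [hπL]; exact Submodule.Quotient.norm_mk_le Y x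
  -- uniform bound via Banach-Steinhaus
  obtain ⟨C, hC⟩ : ∃ C, ∀ n, ‖qs n‖ ≤ C := by
    apply banach_steinhaus
    intro q
    have hb : BddAbove (Set.range fun n => ‖qs n q‖) := (hweakstar q).norm.bddAbove_range
    obtain ⟨b, hb⟩ := hb
    exact ⟨b, fun n => hb (Set.mem_range_self n)⟩
  have hC0 : 0 ≤ C := le_trans (norm_nonneg _) (hC 0)
  set κ := limsup (fun n => ‖qs n‖) atTop with hκdef
  have hbd1 : IsBoundedUnder (· ≤ ·) atTop (fun n => ‖qs n‖) :=
    isBoundedUnder_of ⟨C, fun n => hC n⟩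
  have hbd2 : IsBoundedUnder (· ≤ ·) atTop (fun n => ‖qstar + qs n‖) :=
    isBoundedUnder_of ⟨‖qstar‖ + C, fun n => (norm_add_le _ _).trans (by linarith [hC n])⟩
  have hcob : IsCoboundedUnder (· ≤ ·) atTop (fun n => ‖qs n‖) :=
    IsBoundedUnder.isCoboundedUnder_le (isBoundedUnder_of ⟨0, fun n => norm_nonneg _⟩)
  rw [ge_iff_le]
  refine le_of_forall_pos_le_add fun ε hε => ?_
  have hε' : 0 < ε / 7 := by linarith
  set ε' := ε / 7 with hε'def
  -- choose x approximating the norm of qstar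
  obtain ⟨x, hx1, hx2⟩ := dual_lift Y πL hπlift qstar hε'
  -- tail control for g = qstar ∘ πL
  obtain ⟨N, hN⟩ := tail_small (qstar.comp πL) hε'
  have hgx : ‖qstar‖ - 2 * ε' ≤ qstar (πL (hd N x)) := by
    have h1 : qstar (πL (hd N x)) + qstar (πL (tl N x)) = qstar (πL x) := by
      rw [← map_add, ← map_add, hd_add_tl]
    have h2 : |qstar (πL (tl N x))| ≤ ε' := hN x hx1
    have h3 := abs_le.mp h2
    linarith
  -- eventual smallness
  have E1 : ∀ᶠ n in atTop, |qs n (πL (hd N x))| ≤ ε' := by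
    filter_upwards [Metric.tendsto_nhds.mp (hweakstar (πL (hd N x))) ε' hε'] with n hn
    rw [Real.dist_eq, sub_zero] at hn; exact hn.le
  have E2 : ∀ᶠ n in atTop, ∑ i ∈ Finset.range N, |qs n (πL (e i))| ≤ ε' := by
    have hsum : Tendsto (fun n => ∑ i ∈ Finset.range N, |qs n (πL (e i))|) atTop (𝓝 0) := by
      have h := tendsto_finset_sum (Finset.range N)
        (fun i _ => (abs_zero (α := ℝ) ▸ (hweakstar (πL (e i))).abs))
      simpa using h
    filter_upwards [Metric.tendsto_nhds.mp hsum ε' hε'] with n hn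
    rw [Real.dist_eq, sub_zero] at hn
    exact (le_abs_self _).trans hn.le
  have F : ∃ᶠ n in atTop, κ - ε' < ‖qs n‖ :=
    frequently_lt_of_lt_limsup hcob (by linarith)
  have Freq : ∃ᶠ n in atTop, ‖qstar‖ + κ - ε ≤ ‖qstar + qs n‖ := by
    refine (F.and_eventually (E1.and E2)).mono ?_
    rintro n ⟨hn1, hn2, hn3⟩
    obtain ⟨y, hy1, hy2⟩ := dual_lift Y πL hπlift (qs n) hε'
    set z := hd N x + tl N y with hzdef
    have hz : ‖z‖ ≤ 1 := le_trans (mix_norm_le N x y) (max_le hx1 hy1)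
    have hzπ : ‖πL z‖ ≤ 1 := le_trans (hπnorm z) hz
    have hupper : (qstar + qs n) (πL z) ≤ ‖qstar + qs n‖ :=
      le_trans (le_abs_self _) ((qstar + qs n).unit_le_opNorm _ hzπ)
    -- head bound on y for qs n
    have hhead : |qs n (πL (hd N y))| ≤ ε' := by
      have hb := head_bound ((qs n).comp πL) N y hy1
      simp only [ContinuousLinearMap.comp_apply] at hb
      exact hb.trans hn3
    have htail : ‖qs n‖ - 2 * ε' ≤ qs n (πL (tl N y)) := by
      have h1 : qs n (πL (hd N y)) + qs n (πL (tl N y)) = qs n (πL y) := by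
        rw [← map_add, ← map_add, hd_add_tl]
      have h3 := abs_le.mp hhead
      linarith
    have hgz : |qstar (πL (tl N y))| ≤ ε' := hN y hy1
    have h3 := abs_le.mp hgz
    have h4 := abs_le.mp hn2
    have hlow : ‖qstar‖ + ‖qs n‖ - 6 * ε' ≤ (qstar + qs n) (πL z) := by
      have hsplit : (qstar + qs n) (πL z)
          = qstar (πL (hd N x)) + qstar (πL (tl N y))
            + (qs n (πL (hd N x)) + qs n (πL (tl N y))) := by
        rw [ContinuousLinearMap.add_apply, hzdef, map_add, map_add, map_add]
      rw [hsplit]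
      linarith
    have : ‖qstar‖ + κ - ε ≤ (qstar + qs n) (πL z) := by linarith [hε'def.ge, hε'def.le]
    linarith
  have := le_limsup_of_frequently_le Freq hbd2
  linarith
end

section
/- Let K be a compact Hausdorff space such that the n-th Cantor–Bendixson derivative K⁽ⁿ⁾ is empty for some n ∈ ℕ, with n minimal and n ≥ 1. Let L = K′ be the derived set and X = {f ∈ C(K) : f|_L = 0}. Then X is isometrically isomorphic to c₀(K \ L), the space of functions on the (discrete) set of isolated points of K vanishing at infinity. -/
open Filter Topology Set
open scoped ZeroAtInfty

lemma aux_dense12 {K : Type*} [TopologicalSpace K] (n : ℕ)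
    (hn : derivedSet^[n] (Set.univ : Set K) = ∅) :
    Dense ((derivedSet (Set.univ : Set K))ᶜ) := by
  rw [← interior_eq_empty_iff_dense_compl]
  set U := interior (derivedSet (Set.univ : Set K)) with hU
  have key : ∀ m, U ⊆ derivedSet^[m] (Set.univ : Set K) := by
    intro m
    induction m with
    | zero => simp
    | succ m ih =>
      intro x hx
      rw [Function.iterate_succ_apply']
      have hacc : AccPt x (𝓟 U) := by
        have hxL : x ∈ derivedSet (Set.univ : Set K) := interior_subset hx
        rw [mem_derivedSet, accPt_iff_nhds] at hxL
        rw [accPt_iff_nhds]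
        intro V hV
        obtain ⟨y, ⟨⟨hyV, hyU⟩, -⟩, hyx⟩ := hxL (V ∩ U)
          (Filter.inter_mem hV (isOpen_interior.mem_nhds hx))
        exact ⟨y, ⟨hyV, hyU⟩, hyx⟩
      exact hacc.mono (principal_mono.2 ih)
  have h := key n
  rw [hn, subset_empty_iff] at h
  exact h

/-- Let `K` be a compact Hausdorff space with `K⁽ⁿ⁾ = ∅` for some minimal `n ≥ 1` (iterated
Cantor–Bendixson derivative).  Let `L = K′` be the derived set and
`X = {f ∈ C(K) : f|_L = 0}`.  Then `X` is isometrically isomorphic to `c₀(K \ L)`, the space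
of functions on the set of isolated points of `K` vanishing at infinity. -/
theorem stmt12 {K : Type*} [TopologicalSpace K] [CompactSpace K] [T2Space K]
    (n : ℕ) (hn : derivedSet^[n] (Set.univ : Set K) = ∅)
    (hmin : ∀ m < n, derivedSet^[m] (Set.univ : Set K) ≠ ∅) (hn1 : 1 ≤ n)
    (L : Set K) (hL : L = derivedSet (Set.univ : Set K))
    (X : Submodule ℝ C(K, ℝ)) (hX : ∀ f : C(K, ℝ), f ∈ X ↔ ∀ x ∈ L, f x = 0) :
    Nonempty (X ≃ₗᵢ[ℝ] C₀(↥(Set.univ \ L), ℝ)) := by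
  classical
  set D : Set K := Set.univ \ L with hD
  have hmemD : ∀ x : K, x ∈ D ↔ x ∉ L := by
    intro x; simp [hD]
  have hdense : Dense D := by
    have h := aux_dense12 n hn
    have : D = (derivedSet (Set.univ : Set K))ᶜ := by
      rw [hD, hL, Set.diff_eq, Set.univ_inter]
    rw [this]
    exact h
  -- isolated points
  have hiso : ∀ x ∈ D, {x} ∈ 𝓝 x := by
    intro x hx
    have hxL : ¬ AccPt x (𝓟 (Set.univ : Set K)) := by
      have := (hmemD x).1 hx
      rw [hL] at this
      exact this
    rw [accPt_iff_nhds] at hxL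
    push_neg at hxL
    obtain ⟨U, hU, hUx⟩ := hxL
    exact mem_of_superset hU (fun y hy => hUx y ⟨hy, trivial⟩)
  -- forward map values are zero at infinity
  have zai : ∀ f : X, Tendsto (fun y : ↥D => (f : C(K, ℝ)) y.1) (cocompact ↥D) (𝓝 0) := by
    intro f
    rw [Metric.tendsto_nhds]
    intro ε hε
    rw [Filter.hasBasis_cocompact.eventually_iff]
    set T : Set K := {x | ε ≤ |(f : C(K, ℝ)) x|} with hT
    have hTclosed : IsClosed T :=
      isClosed_le continuous_const ((map_continuous (f : C(K, ℝ))).abs)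
    have hTD : T ⊆ D := by
      intro x hxT
      rw [hmemD]
      intro hxL
      have h0 : (f : C(K, ℝ)) x = 0 := (hX _).1 f.2 x hxL
      rw [mem_setOf_eq, h0] at hxT
      simp at hxT
      linarith
    refine ⟨Subtype.val ⁻¹' T, ?_, ?_⟩
    · rw [Subtype.isCompact_iff, Set.image_preimage_eq_inter_range, Subtype.range_coe,
        Set.inter_eq_self_of_subset_left hTD]
      exact hTclosed.isCompact
    · intro y hy
      simp only [mem_compl_iff, mem_preimage, hT, mem_setOf_eq, not_le] at hy
      simpa [Real.dist_eq] using hy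
  -- forward map
  set F : X → C₀(↥D, ℝ) := fun f =>
    ⟨⟨fun y => (f : C(K, ℝ)) y.1,
      (map_continuous (f : C(K, ℝ))).comp continuous_subtype_val⟩, zai f⟩ with hF
  -- extension by zero is continuous
  have Gcont : ∀ g : C₀(↥D, ℝ),
      Continuous (fun x : K => if h : x ∈ D then g ⟨x, h⟩ else 0) := by
    intro g
    rw [continuous_iff_continuousAt]
    intro x
    by_cases hx : x ∈ D
    · have h1 : 𝓝 x = pure x := le_antisymm (le_pure_iff.2 (hiso x hx)) (pure_le_nhds x)
      unfold ContinuousAt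
      rw [h1]
      exact tendsto_pure_left.mpr (fun s hs => mem_of_mem_nhds hs)
    · have hx0 : (fun x : K => if h : x ∈ D then g ⟨x, h⟩ else 0) x = 0 := dif_neg hx
      unfold ContinuousAt
      rw [hx0, Metric.tendsto_nhds]
      intro ε hε
      obtain ⟨S, hS, hSsub⟩ := Filter.hasBasis_cocompact.eventually_iff.1
        (Metric.tendsto_nhds.1 g.zero_at_infty' ε hε)
      have hTcp : IsCompact (Subtype.val '' S : Set K) := hS.image continuous_subtype_val
      have hTc : IsClosed (Subtype.val '' S : Set K) := hTcp.isClosed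
      have hxT : x ∉ (Subtype.val '' S : Set K) := by
        rintro ⟨y, hyS, hyx⟩
        exact hx (hyx ▸ y.2)
      filter_upwards [hTc.isOpen_compl.mem_nhds hxT] with z hz
      by_cases hzD : z ∈ D
      · have hzS : (⟨z, hzD⟩ : ↥D) ∉ S := fun hmem => hz ⟨⟨z, hzD⟩, hmem, rfl⟩
        have := hSsub hzS
        simpa [dif_pos hzD] using this
      · simpa [dif_neg hzD] using hε
  -- inverse map
  set G : C₀(↥D, ℝ) → X := fun g =>
    ⟨⟨fun x => if h : x ∈ D then g ⟨x, h⟩ else 0, Gcont g⟩,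
      (hX _).2 (fun x hxL => dif_neg (fun hd => ((hmemD x).1 hd) hxL))⟩ with hG
  have hnorm : ∀ f : X, ‖F f‖ = ‖(f : C(K, ℝ))‖ := by
    intro f
    refine le_antisymm ?_ ?_
    · rw [← ZeroAtInftyContinuousMap.norm_toBCF_eq_norm]
      exact (BoundedContinuousFunction.norm_le (norm_nonneg _)).2
        (fun y => (f : C(K, ℝ)).norm_coe_le_norm y.1)
    · refine ((f : C(K, ℝ)).norm_le (norm_nonneg _)).2 (fun x => ?_)
      have hclosed : IsClosed {x : K | ‖(f : C(K, ℝ)) x‖ ≤ ‖F f‖} :=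
        isClosed_le (continuous_norm.comp (map_continuous _)) continuous_const
      have hsub : D ⊆ {x : K | ‖(f : C(K, ℝ)) x‖ ≤ ‖F f‖} := by
        intro x hx
        calc ‖(f : C(K, ℝ)) x‖ = ‖(F f).toBCF ⟨x, hx⟩‖ := rfl
          _ ≤ ‖(F f).toBCF‖ := BoundedContinuousFunction.norm_coe_le_norm _ _
          _ = ‖F f‖ := ZeroAtInftyContinuousMap.norm_toBCF_eq_norm
      have : closure D ⊆ {x : K | ‖(f : C(K, ℝ)) x‖ ≤ ‖F f‖} :=
        closure_minimal hsub hclosed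
      exact this (by rw [hdense.closure_eq]; trivial)
  refine ⟨{ toFun := F
            map_add' := ?_
            map_smul' := ?_
            invFun := G
            left_inv := ?_
            right_inv := ?_
            norm_map' := ?_ }⟩
  · intro f g
    ext y
    simp [hF]
  · intro c f
    ext y
    simp [hF]
  · intro f
    apply Subtype.ext
    ext x
    show (if h : x ∈ D then (f : C(K, ℝ)) x else 0) = (f : C(K, ℝ)) x
    by_cases hx : x ∈ D
    · rw [dif_pos hx]
    · rw [dif_neg hx]
      exact ((hX _).1 f.2 x (not_not.1 ((hmemD x).not.1 hx))).symm
  · intro g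
    ext y
    show (if h : y.1 ∈ D then g ⟨y.1, h⟩ else 0) = g y
    rw [dif_pos y.2]
  · intro f
    exact hnorm f
end

section
/- Let X be a Banach space and suppose there is a Lipschitz projection P (a Lipschitz map with P ∘ P = P) from a Banach space Z onto a closed linear subspace Y ⊆ Z with Y linearly isometric to X, where X is 1-complemented in its bidual. Then there exists a bounded linear projection π : Z → Y with ‖π‖ ≤ Lip(P). -/
open BoundedContinuousFunction
open scoped Pointwise

namespace Lind16

def Disc (G : Type*) : Type _ := G
def Disc.mk {G : Type*} : G → Disc G := id
def Disc.un {G : Type*} : Disc G → G := id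
@[simp] theorem Disc.un_mk {G : Type*} (x : G) : Disc.un (Disc.mk x) = x := rfl
instance (G : Type*) : TopologicalSpace (Disc G) := ⊥
instance (G : Type*) : DiscreteTopology (Disc G) := ⟨rfl⟩
instance (G : Type*) [Nonempty G] : Nonempty (Disc G) := ‹Nonempty G›

/-- translation of a bounded function on a discrete group -/
noncomputable def transl {G : Type*} [AddCommGroup G] (a : G) (f : Disc G →ᵇ ℝ) : Disc G →ᵇ ℝ :=
  f.compContinuous ⟨fun w => Disc.mk (Disc.un w + a), continuous_of_discreteTopology⟩

@[simp] theorem transl_apply {G : Type*} [AddCommGroup G] (a : G) (f : Disc G →ᵇ ℝ) (x : Disc G) :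
    transl a f x = f (Disc.mk (Disc.un x + a)) := rfl

theorem abs_apply_le {G : Type*} (f : Disc G →ᵇ ℝ) (x : Disc G) : |f x| ≤ ‖f‖ := by
  have := f.norm_coe_le_norm x; rwa [Real.norm_eq_abs] at this

/-- Existence of an invariant mean on an abelian group. -/
theorem exists_invariant_mean (G : Type*) [AddCommGroup G] :
    ∃ M : (Disc G →ᵇ ℝ) →ₗ[ℝ] ℝ,
      (∀ f, M f ≤ ‖f‖) ∧
      (∀ c : ℝ, M (BoundedContinuousFunction.const (Disc G) c) = c) ∧
      (∀ (f : Disc G →ᵇ ℝ) (a : G), M (transl a f) = M f) := by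
  have hne : Nonempty G := ⟨0⟩
  let S : (Disc G →ᵇ ℝ) → Set ℝ := fun f =>
    { r | ∃ (n : ℕ) (_ : 0 < n) (a : Fin n → G),
        r = ⨆ w : G, (∑ i, f (Disc.mk (w + a i))) / n }
  -- pointwise bounds on the averages
  have hbdd : ∀ (f : Disc G →ᵇ ℝ) (n : ℕ) (a : Fin n → G) (w : G),
      -‖f‖ ≤ (∑ i, f (Disc.mk (w + a i))) / n ∧ (∑ i, f (Disc.mk (w + a i))) / n ≤ ‖f‖ := by
    intro f n a w
    rcases Nat.eq_zero_or_pos n with h0 | hn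
    · subst h0; simp [norm_nonneg]
    have hn' : (0:ℝ) < n := by exact_mod_cast hn
    have h1 : ∑ i, f (Disc.mk (w + a i)) ≤ n * ‖f‖ := by
      calc ∑ i, f (Disc.mk (w + a i)) ≤ (Finset.univ : Finset (Fin n)).card • ‖f‖ :=
            Finset.sum_le_card_nsmul _ _ _ (fun i _ => le_trans (le_abs_self _) (abs_apply_le f _))
        _ = n * ‖f‖ := by simp [nsmul_eq_mul]
    have h2 : (n:ℝ) * (-‖f‖) ≤ ∑ i, f (Disc.mk (w + a i)) := by
      calc (n:ℝ) * (-‖f‖) = (Finset.univ : Finset (Fin n)).card • (-‖f‖) := by simp [nsmul_eq_mul]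
        _ ≤ ∑ i, f (Disc.mk (w + a i)) := Finset.card_nsmul_le_sum _ _ _
            (fun i _ => by linarith [abs_le.mp (abs_apply_le f (Disc.mk (w + a i)))])
    constructor
    · rw [le_div_iff₀ hn']; linarith
    · rw [div_le_iff₀ hn']; linarith
  have hBddA : ∀ (f : Disc G →ᵇ ℝ) (n : ℕ) (a : Fin n → G),
      BddAbove (Set.range fun w : G => (∑ i, f (Disc.mk (w + a i))) / n) :=
    fun f n a => ⟨‖f‖, by rintro r ⟨w, rfl⟩; exact (hbdd f n a w).2⟩
  -- the iSup lies between -‖f‖ and ‖f‖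
  have hsup_le : ∀ (f : Disc G →ᵇ ℝ) (n : ℕ) (a : Fin n → G),
      (⨆ w : G, (∑ i, f (Disc.mk (w + a i))) / n) ≤ ‖f‖ :=
    fun f n a => ciSup_le (fun w => (hbdd f n a w).2)
  have hsup_ge : ∀ (f : Disc G →ᵇ ℝ) (n : ℕ) (a : Fin n → G),
      -‖f‖ ≤ ⨆ w : G, (∑ i, f (Disc.mk (w + a i))) / n :=
    fun f n a => le_trans (hbdd f n a 0).1 (le_ciSup (hBddA f n a) 0)
  have hSne : ∀ f : Disc G →ᵇ ℝ, (S f).Nonempty := fun f =>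
    ⟨_, 1, one_pos, fun _ => 0, rfl⟩
  have hSbdd : ∀ f : Disc G →ᵇ ℝ, BddBelow (S f) := fun f =>
    ⟨-‖f‖, by rintro r ⟨n, hn, a, rfl⟩; exact hsup_ge f n a⟩
  set p : (Disc G →ᵇ ℝ) → ℝ := fun f => sInf (S f) with hp
  have p_le_mem : ∀ (f : Disc G →ᵇ ℝ) (r : ℝ), r ∈ S f → p f ≤ r := fun f r hr => csInf_le (hSbdd f) hr
  have p_lb : ∀ f : Disc G →ᵇ ℝ, -‖f‖ ≤ p f := fun f =>
    le_csInf (hSne f) (by rintro r ⟨n, hn, a, rfl⟩; exact hsup_ge f n a)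
  -- p f ≤ c whenever f ≤ c pointwise
  have p_le_of_forall : ∀ (f : Disc G →ᵇ ℝ) (c : ℝ), (∀ x, f x ≤ c) → p f ≤ c := by
    intro f c hc
    refine le_trans (p_le_mem f _ ⟨1, one_pos, fun _ => 0, rfl⟩) ?_
    refine ciSup_le fun w => ?_
    simp only [Fin.sum_univ_one, Nat.cast_one, div_one, add_zero]
    exact hc _
  have p_le_norm : ∀ f : Disc G →ᵇ ℝ, p f ≤ ‖f‖ := fun f =>
    p_le_of_forall f ‖f‖ (fun x => le_trans (le_abs_self _) (abs_apply_le f x))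
  -- lower bound by pointwise lower bounds
  have p_ge_of_forall : ∀ (f : Disc G →ᵇ ℝ) (c : ℝ), (∀ x, c ≤ f x) → c ≤ p f := by
    intro f c hc
    refine le_csInf (hSne f) ?_
    rintro r ⟨n, hn, a, rfl⟩
    have hn' : (0:ℝ) < n := by exact_mod_cast hn
    refine le_trans ?_ (le_ciSup (hBddA f n a) 0)
    rw [le_div_iff₀ hn']
    calc c * n = (Finset.univ : Finset (Fin n)).card • c := by simp [nsmul_eq_mul, mul_comm]
      _ ≤ ∑ i, f (Disc.mk (0 + a i)) := Finset.card_nsmul_le_sum _ _ _ (fun i _ => hc _)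
  -- positive homogeneity
  have hsmul_sup : ∀ (c : ℝ), 0 ≤ c → ∀ (f : Disc G →ᵇ ℝ) (n : ℕ) (a : Fin n → G),
      (⨆ w : G, (∑ i, (c • f) (Disc.mk (w + a i))) / n)
        = c * ⨆ w : G, (∑ i, f (Disc.mk (w + a i))) / n := by
    intro c hc f n a
    rw [Real.mul_iSup_of_nonneg hc]
    congr 1; funext w
    have : ∀ i : Fin n, ((c • f) (Disc.mk (w + a i)) : ℝ) = c * f (Disc.mk (w + a i)) :=
      fun i => BoundedContinuousFunction.smul_apply c f _
    rw [Finset.sum_congr rfl fun i _ => this i, ← Finset.mul_sum, mul_div_assoc]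
  have p_hom : ∀ c : ℝ, 0 < c → ∀ f : Disc G →ᵇ ℝ, p (c • f) = c * p f := by
    intro c hc f
    have hset : S (c • f) = c • S f := by
      ext r
      constructor
      · rintro ⟨n, hn, a, rfl⟩
        exact ⟨⨆ w : G, (∑ i, f (Disc.mk (w + a i))) / n, ⟨n, hn, a, rfl⟩,
          by beta_reduce; rw [smul_eq_mul, ← hsmul_sup c hc.le f n a]⟩
      · rintro ⟨s, ⟨n, hn, a, rfl⟩, rfl⟩
        exact ⟨n, hn, a, by beta_reduce; rw [smul_eq_mul, ← hsmul_sup c hc.le f n a]⟩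
    rw [hp]; simp only [hset, Real.sInf_smul_of_nonneg hc.le, smul_eq_mul]
  -- subadditivity
  have p_add : ∀ f g : Disc G →ᵇ ℝ, p (f + g) ≤ p f + p g := by
    intro f g
    refine le_of_forall_pos_le_add fun ε hε => ?_
    obtain ⟨r₁, hr₁S, hr₁⟩ := (csInf_lt_iff (hSbdd f) (hSne f)).mp
      (show p f < p f + ε/2 by linarith)
    obtain ⟨r₂, hr₂S, hr₂⟩ := (csInf_lt_iff (hSbdd g) (hSne g)).mp
      (show p g < p g + ε/2 by linarith)
    obtain ⟨m, hm, a, rfl⟩ := hr₁S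
    obtain ⟨n, hn, b, rfl⟩ := hr₂S
    set r₁ := ⨆ w : G, (∑ i, f (Disc.mk (w + a i))) / m with hr₁d
    set r₂ := ⨆ w : G, (∑ i, g (Disc.mk (w + b i))) / n with hr₂d
    have hav₁ : ∀ w : G, ∑ i, f (Disc.mk (w + a i)) ≤ m * r₁ := by
      intro w
      have := le_ciSup (hBddA f m a) w
      have hm' : (0:ℝ) < m := by exact_mod_cast hm
      rw [← hr₁d] at this
      nlinarith [(div_le_iff₀ hm').mp this]
    have hav₂ : ∀ w : G, ∑ i, g (Disc.mk (w + b i)) ≤ n * r₂ := by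
      intro w
      have := le_ciSup (hBddA g n b) w
      have hn' : (0:ℝ) < n := by exact_mod_cast hn
      rw [← hr₂d] at this
      nlinarith [(div_le_iff₀ hn').mp this]
    set N : ℕ := m * n with hN
    have hNpos : 0 < N := Nat.mul_pos hm hn
    set c : Fin N → G := fun k =>
      a (finProdFinEquiv.symm k).1 + b (finProdFinEquiv.symm k).2 with hcdef
    have key : (⨆ w : G, (∑ i, (f + g) (Disc.mk (w + c i))) / N) ≤ r₁ + r₂ := by
      refine ciSup_le fun w => ?_
      have hN' : (0:ℝ) < N := by exact_mod_cast hNpos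
      rw [div_le_iff₀ hN']
      have hsum : ∑ i, (f + g) (Disc.mk (w + c i))
          = ∑ q : Fin m × Fin n, (f + g) (Disc.mk (w + (a q.1 + b q.2))) := by
        rw [← Equiv.sum_comp finProdFinEquiv
          (fun k => (f + g) (Disc.mk (w + c k)))]
        refine Finset.sum_congr rfl fun q _ => ?_
        simp only [hcdef, Equiv.symm_apply_apply]
      rw [hsum]
      have hsplit : ∑ q : Fin m × Fin n, (f + g) (Disc.mk (w + (a q.1 + b q.2)))
          = (∑ q : Fin m × Fin n, f (Disc.mk (w + (a q.1 + b q.2))))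
            + ∑ q : Fin m × Fin n, g (Disc.mk (w + (a q.1 + b q.2))) := by
        rw [← Finset.sum_add_distrib]
        exact Finset.sum_congr rfl fun q _ => rfl
      rw [hsplit]
      have hf' : ∑ q : Fin m × Fin n, f (Disc.mk (w + (a q.1 + b q.2))) ≤ n * (m * r₁) := by
        calc ∑ q : Fin m × Fin n, f (Disc.mk (w + (a q.1 + b q.2)))
            = ∑ j : Fin n, ∑ i : Fin m, f (Disc.mk ((w + b j) + a i)) := by
              rw [Fintype.sum_prod_type, Finset.sum_comm]
              refine Finset.sum_congr rfl fun j _ => Finset.sum_congr rfl fun i _ => ?_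
              congr 2; abel
          _ ≤ ∑ j : Fin n, m * r₁ :=
              Finset.sum_le_sum fun j _ => hav₁ (w + b j)
          _ = n * (m * r₁) := by simp [Finset.sum_const, nsmul_eq_mul]
      have hg' : ∑ q : Fin m × Fin n, g (Disc.mk (w + (a q.1 + b q.2))) ≤ m * (n * r₂) := by
        calc ∑ q : Fin m × Fin n, g (Disc.mk (w + (a q.1 + b q.2)))
            = ∑ i : Fin m, ∑ j : Fin n, g (Disc.mk ((w + a i) + b j)) := by
              rw [Fintype.sum_prod_type]
              refine Finset.sum_congr rfl fun i _ => Finset.sum_congr rfl fun j _ => ?_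
              congr 2; abel
          _ ≤ ∑ i : Fin m, n * r₂ :=
              Finset.sum_le_sum fun i _ => hav₂ (w + a i)
          _ = m * (n * r₂) := by simp [Finset.sum_const, nsmul_eq_mul]
      have : (N:ℝ) = (m : ℝ) * n := by rw [hN]; push_cast; ring
      rw [this]; nlinarith
    have := le_trans (p_le_mem (f + g) _ ⟨N, hNpos, c, rfl⟩) key
    linarith
  -- translation estimates
  have p_sub_transl : ∀ (f : Disc G →ᵇ ℝ) (a : G), p (f - transl a f) ≤ 0 ∧ p (transl a f - f) ≤ 0 := by
    intro f a
    have main : ∀ (n : ℕ), 0 < n →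
        p (f - transl a f) ≤ 2 * ‖f‖ / n ∧ p (transl a f - f) ≤ 2 * ‖f‖ / n := by
      intro n hn
      have hn' : (0:ℝ) < n := by exact_mod_cast hn
      set aa : Fin n → G := fun i => (i : ℕ) • a with haa
      have tele1 : ∀ w : G, ∑ i, (f - transl a f) (Disc.mk (w + aa i))
          = f (Disc.mk (w + 0 • a)) - f (Disc.mk (w + n • a)) := by
        intro w
        have : ∀ i : Fin n, (f - transl a f) (Disc.mk (w + aa i))
            = f (Disc.mk (w + (i:ℕ) • a)) - f (Disc.mk (w + ((i:ℕ)+1) • a)) := by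
          intro i
          have : (w + (i:ℕ) • a) + a = w + ((i:ℕ)+1) • a := by
            rw [succ_nsmul]; abel
          simp only [haa, BoundedContinuousFunction.coe_sub, Pi.sub_apply, transl_apply,
            Disc.un_mk, this]
        rw [Finset.sum_congr rfl (fun i _ => this i)]
        rw [Fin.sum_univ_eq_sum_range (fun k => f (Disc.mk (w + k • a)) - f (Disc.mk (w + (k+1) • a))) n]
        exact Finset.sum_range_sub' (fun k => f (Disc.mk (w + k • a))) n
      have tele2 : ∀ w : G, ∑ i, (transl a f - f) (Disc.mk (w + aa i))
          = f (Disc.mk (w + n • a)) - f (Disc.mk (w + 0 • a)) := by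
        intro w
        have : ∀ i : Fin n, (transl a f - f) (Disc.mk (w + aa i))
            = f (Disc.mk (w + ((i:ℕ)+1) • a)) - f (Disc.mk (w + (i:ℕ) • a)) := by
          intro i
          have : (w + (i:ℕ) • a) + a = w + ((i:ℕ)+1) • a := by
            rw [succ_nsmul]; abel
          simp only [haa, BoundedContinuousFunction.coe_sub, Pi.sub_apply, transl_apply,
            Disc.un_mk, this]
        rw [Finset.sum_congr rfl (fun i _ => this i)]
        rw [Fin.sum_univ_eq_sum_range (fun k => f (Disc.mk (w + (k+1) • a)) - f (Disc.mk (w + k • a))) n]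
        exact Finset.sum_range_sub (fun k => f (Disc.mk (w + k • a))) n
      constructor
      · refine le_trans (p_le_mem _ _ ⟨n, hn, aa, rfl⟩) (ciSup_le fun w => ?_)
        rw [tele1 w, div_le_div_iff₀ hn' hn']
        have h1 := abs_le.mp (abs_apply_le f (Disc.mk (w + 0 • a)))
        have h2 := abs_le.mp (abs_apply_le f (Disc.mk (w + n • a)))
        nlinarith
      · refine le_trans (p_le_mem _ _ ⟨n, hn, aa, rfl⟩) (ciSup_le fun w => ?_)
        rw [tele2 w, div_le_div_iff₀ hn' hn']
        have h1 := abs_le.mp (abs_apply_le f (Disc.mk (w + 0 • a)))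
        have h2 := abs_le.mp (abs_apply_le f (Disc.mk (w + n • a)))
        nlinarith
    have lim : ∀ q : ℝ, (∀ n : ℕ, 0 < n → q ≤ 2 * ‖f‖ / n) → q ≤ 0 := by
      intro q hq
      refine le_of_forall_pos_le_add fun ε hε => ?_
      obtain ⟨n, hngt⟩ := exists_nat_gt (2 * ‖f‖ / ε)
      have hn : 0 < n := by
        by_contra h
        push_neg at h
        interval_cases n
        · simp at hngt
          nlinarith [norm_nonneg f, div_nonneg (by nlinarith [norm_nonneg f] : (0:ℝ) ≤ 2*‖f‖) hε.le]
      have hn' : (0:ℝ) < n := by exact_mod_cast hn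
      have : 2 * ‖f‖ / n ≤ ε := by
        rw [div_le_iff₀ hn']
        have := (div_lt_iff₀ hε).mp hngt
        nlinarith
      linarith [hq n hn]
    exact ⟨lim _ (fun n hn => (main n hn).1), lim _ (fun n hn => (main n hn).2)⟩
  -- Hahn–Banach
  have hzero : ∀ x : ((⊥ : Submodule ℝ (Disc G →ᵇ ℝ)) : Type _),
      (⟨⊥, 0⟩ : (Disc G →ᵇ ℝ) →ₗ.[ℝ] ℝ) x ≤ p x := by
    rintro ⟨x, hx⟩
    rw [Submodule.mem_bot] at hx
    subst hx
    have := p_lb (0 : Disc G →ᵇ ℝ)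
    simpa using this
  obtain ⟨M, -, hM⟩ := exists_extension_of_le_sublinear (⟨⊥, 0⟩ : (Disc G →ᵇ ℝ) →ₗ.[ℝ] ℝ) p p_hom p_add hzero
  refine ⟨M, fun f => (hM f).trans (p_le_norm f), ?_, ?_⟩
  · intro cc
    have h1 : M (BoundedContinuousFunction.const (Disc G) cc) ≤ cc :=
      (hM _).trans (p_le_of_forall _ cc (fun x => le_of_eq rfl))
    have h2 : M (-(BoundedContinuousFunction.const (Disc G) cc)) ≤ -cc :=
      (hM _).trans (p_le_of_forall _ (-cc) (fun x => le_of_eq rfl))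
    rw [map_neg] at h2
    linarith
  · intro f a
    have h1 : M (f - transl a f) ≤ 0 := (hM _).trans (p_sub_transl f a).1
    have h2 : M (transl a f - f) ≤ 0 := (hM _).trans (p_sub_transl f a).2
    rw [map_sub] at h1 h2
    linarith

end Lind16

open NormedSpace
open scoped NNReal
open Lind16 BoundedContinuousFunction

/-- Lindenstrauss: let `X` be a Banach space which is 1-complemented in its bidual, and
suppose there is a Lipschitz projection `P` from a Banach space `Z` onto a closed linear
subspace `Y ⊆ Z` which is linearly isometric to `X`.  Then there is a bounded linear
projection `π : Z → Y` with `‖π‖ ≤ Lip(P)`. -/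
theorem stmt16 {X Z : Type*} [NormedAddCommGroup X] [NormedSpace ℝ X] [CompleteSpace X]
    [NormedAddCommGroup Z] [NormedSpace ℝ Z] [CompleteSpace Z]
    (hcompl : ∃ Q : StrongDual ℝ (StrongDual ℝ X) →L[ℝ] X,
      @Norm.norm _ (ContinuousLinearMap.hasOpNorm (𝕜 := ℝ) (𝕜₂ := ℝ)
        (E := StrongDual ℝ (StrongDual ℝ X)) (F := X)) Q ≤ 1 ∧
      ∀ x : X, Q (inclusionInDoubleDual ℝ X x) = x)
    (Y : Submodule ℝ Z) (hYclosed : IsClosed (Y : Set Z))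
    (hiso : Nonempty (Y ≃ₗᵢ[ℝ] X))
    (P : Z → Z) (KP : ℝ≥0) (hP : LipschitzWith KP P)
    (hPP : ∀ z : Z, P (P z) = P z) (hPrange : Set.range P = (Y : Set Z)) :
    ∃ π : Z →L[ℝ] Z, ‖π‖ ≤ KP ∧ Set.range π = (Y : Set Z) ∧ ∀ z : Z, π (π z) = π z := by
  classical
  obtain ⟨Q, hQnorm, hQ⟩ := hcompl
  obtain ⟨ι⟩ := hiso
  have hPmem : ∀ z : Z, P z ∈ Y := fun z => by
    have h : P z ∈ Set.range P := Set.mem_range_self z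
    rw [hPrange] at h; exact h
  set F : Z → X := fun z => ι ⟨P z, hPmem z⟩ with hF
  have hPfix : ∀ y : Z, y ∈ Y → P y = y := by
    intro y hy
    have h : y ∈ Set.range P := by rw [hPrange]; exact hy
    obtain ⟨z, rfl⟩ := h
    exact hPP z
  have hFY : ∀ u : ↥Y, F ↑u = ι u := by
    intro u
    have h : F ↑u = ι ⟨P ↑u, hPmem ↑u⟩ := rfl
    rw [h]
    congr 1
    apply Subtype.coe_injective
    exact hPfix ↑u u.2
  have hFlip : ∀ z z' : Z, ‖F z - F z'‖ ≤ KP * ‖z - z'‖ := by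
    intro z z'
    calc ‖F z - F z'‖ = ‖ι (⟨P z, hPmem z⟩ : Y) - ι (⟨P z', hPmem z'⟩ : Y)‖ := rfl
      _ = ‖ι ((⟨P z, hPmem z⟩ : Y) - ⟨P z', hPmem z'⟩)‖ := by rw [map_sub]
      _ = ‖((⟨P z, hPmem z⟩ : Y) - ⟨P z', hPmem z'⟩)‖ := ι.norm_map _
      _ = ‖P z - P z'‖ := rfl
      _ ≤ KP * ‖z - z'‖ := by
          have := hP.dist_le_mul z z'
          rwa [dist_eq_norm, dist_eq_norm] at this
  -- first averaging: over Y
  obtain ⟨M₁, hM₁norm, hM₁const, hM₁transl⟩ := Lind16.exists_invariant_mean ↥Y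
  have habs₁ : ∀ g, |M₁ g| ≤ ‖g‖ := by
    intro g
    refine abs_le.mpr ⟨?_, hM₁norm g⟩
    have := hM₁norm (-g)
    rw [map_neg, norm_neg] at this
    linarith
  have hφpt : ∀ (z z' : Z) (f : StrongDual ℝ X) (u : Z),
      ‖f (F (z + u) - F (z' + u))‖ ≤ ‖f‖ * (KP * ‖z - z'‖) := by
    intro z z' f u
    refine le_trans (f.le_opNorm _) (mul_le_mul_of_nonneg_left ?_ (norm_nonneg f))
    have := hFlip (z + u) (z' + u)
    rwa [add_sub_add_right_eq_sub] at this
  let φ : Z → StrongDual ℝ X → (Disc ↥Y →ᵇ ℝ) := fun z f =>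
    BoundedContinuousFunction.ofNormedAddCommGroup
      (fun w => f (F (z + ↑(Disc.un w)) - F ↑(Disc.un w)))
      continuous_of_discreteTopology (‖f‖ * (KP * ‖z‖))
      (fun w => by
        have := hφpt z 0 f ↑(Disc.un w)
        rwa [zero_add, sub_zero] at this)
  have hφnorm : ∀ (z : Z) (f : StrongDual ℝ X), ‖φ z f‖ ≤ ‖f‖ * (KP * ‖z‖) := by
    intro z f
    exact BoundedContinuousFunction.norm_ofNormedAddCommGroup_le _ (by positivity) _
  let T1 : Z → StrongDual ℝ (StrongDual ℝ X) := fun z =>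
    LinearMap.mkContinuous
      { toFun := fun f => M₁ (φ z f)
        map_add' := fun f g => by
          beta_reduce
          rw [show φ z (f + g) = φ z f + φ z g from BoundedContinuousFunction.ext fun w => rfl,
            map_add]
        map_smul' := fun c f => by
          show M₁ (φ z (c • f)) = c • M₁ (φ z f)
          rw [show φ z (c • f) = c • φ z f from BoundedContinuousFunction.ext fun w => rfl,
            map_smul] }
      (KP * ‖z‖)
      (fun f => by
        rw [Real.norm_eq_abs]
        refine le_trans (habs₁ _) (le_trans (hφnorm z f) (le_of_eq ?_))
        ring)
  have hT1apply : ∀ (z : Z) (f : StrongDual ℝ X), T1 z f = M₁ (φ z f) := fun z f => rfl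
  have hT1eq : ∀ (z : Z) (y : ↥Y),
      T1 (z + ↑y) = T1 z + inclusionInDoubleDual ℝ X (ι y) := by
    intro z y
    ext f
    have hfun : φ (z + ↑y) f = Lind16.transl y (φ z f) +
        BoundedContinuousFunction.const _ (f (ι y)) := by
      ext w
      set u := Disc.un w with hu
      have hBC : F ↑(u + y) - F ↑u = ι y := by
        rw [hFY, hFY, map_add, add_sub_cancel_left]
      have hA : z + ↑y + (↑u : Z) = z + ↑(u + y) := by
        rw [Submodule.coe_add]; abel
      have lhs : φ (z + ↑y) f w = f (F (z + ↑y + ↑u) - F ↑u) := rfl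
      have rhs : (Lind16.transl y (φ z f) +
          BoundedContinuousFunction.const (Disc ↥Y) (f (ι y))) w
          = f (F (z + ↑(u + y)) - F ↑(u + y)) + f (ι y) := rfl
      rw [lhs, rhs, hA]
      have : F (z + ↑(u + y)) - F ↑u
          = (F (z + ↑(u + y)) - F ↑(u + y)) + (F ↑(u + y) - F ↑u) := by abel
      rw [this, map_add, hBC]
    rw [ContinuousLinearMap.add_apply, hT1apply, hT1apply, hfun, map_add, hM₁transl, hM₁const,
      dual_def]
  have hT1lip : ∀ z z' : Z, ‖T1 z - T1 z'‖ ≤ KP * ‖z - z'‖ := by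
    intro z z'
    refine ContinuousLinearMap.opNorm_le_bound _ (by positivity) fun f => ?_
    have h1 : (T1 z - T1 z') f = M₁ (φ z f - φ z' f) := by
      rw [ContinuousLinearMap.sub_apply, hT1apply, hT1apply, map_sub]
    have h2 : ‖φ z f - φ z' f‖ ≤ ‖f‖ * (KP * ‖z - z'‖) := by
      refine (BoundedContinuousFunction.norm_le (by positivity)).mpr fun w => ?_
      have hw : (φ z f - φ z' f) w
          = f (F (z + ↑(Disc.un w)) - F (z' + ↑(Disc.un w))) := by
        have : (φ z f - φ z' f) w = f (F (z + ↑(Disc.un w)) - F ↑(Disc.un w))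
            - f (F (z' + ↑(Disc.un w)) - F ↑(Disc.un w)) := rfl
        rw [this, ← map_sub, sub_sub_sub_cancel_right]
      rw [hw]
      exact hφpt z z' f _
    rw [h1, Real.norm_eq_abs]
    refine le_trans (habs₁ _) (le_trans h2 (le_of_eq (by ring)))
  -- push down to X
  let R : Z → X := fun z => Q (T1 z)
  have hReq : ∀ (z : Z) (y : ↥Y), R (z + ↑y) = R z + ι y := by
    intro z y
    show Q (T1 (z + ↑y)) = Q (T1 z) + ι y
    rw [hT1eq, map_add, hQ]
  have hRlip : ∀ z z' : Z, ‖R z - R z'‖ ≤ KP * ‖z - z'‖ := by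
    intro z z'
    have h : R z - R z' = Q (T1 z - T1 z') := by
      show Q (T1 z) - Q (T1 z') = _
      exact (map_sub Q _ _).symm
    rw [h]
    calc ‖Q (T1 z - T1 z')‖ ≤ @Norm.norm _ (ContinuousLinearMap.hasOpNorm (𝕜 := ℝ) (𝕜₂ := ℝ) (E := StrongDual ℝ (StrongDual ℝ X)) (F := X)) Q * ‖T1 z - T1 z'‖ := ContinuousLinearMap.le_opNorm (𝕜 := ℝ) (𝕜₂ := ℝ) (E := StrongDual ℝ (StrongDual ℝ X)) (F := X) Q _
      _ ≤ 1 * (KP * ‖z - z'‖) :=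
          mul_le_mul hQnorm (hT1lip z z') (ContinuousLinearMap.opNorm_nonneg _) zero_le_one
      _ = KP * ‖z - z'‖ := one_mul _
  have hRpt : ∀ (z z' : Z) (f : StrongDual ℝ X) (v : Z),
      ‖f (R (z + v) - R (z' + v))‖ ≤ ‖f‖ * (KP * ‖z - z'‖) := by
    intro z z' f v
    refine le_trans (f.le_opNorm _) (mul_le_mul_of_nonneg_left ?_ (norm_nonneg f))
    have := hRlip (z + v) (z' + v)
    rwa [add_sub_add_right_eq_sub] at this
  -- second averaging: over Z
  obtain ⟨M₂, hM₂norm, hM₂const, hM₂transl⟩ := Lind16.exists_invariant_mean Z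
  have habs₂ : ∀ g, |M₂ g| ≤ ‖g‖ := by
    intro g
    refine abs_le.mpr ⟨?_, hM₂norm g⟩
    have := hM₂norm (-g)
    rw [map_neg, norm_neg] at this
    linarith
  let ψ : Z → StrongDual ℝ X → (Disc Z →ᵇ ℝ) := fun z f =>
    BoundedContinuousFunction.ofNormedAddCommGroup
      (fun v => f (R (z + Disc.un v) - R (Disc.un v)))
      continuous_of_discreteTopology (‖f‖ * (KP * ‖z‖))
      (fun v => by
        have := hRpt z 0 f (Disc.un v)
        rwa [zero_add, sub_zero] at this)
  have hψnorm : ∀ (z : Z) (f : StrongDual ℝ X), ‖ψ z f‖ ≤ ‖f‖ * (KP * ‖z‖) := by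
    intro z f
    exact BoundedContinuousFunction.norm_ofNormedAddCommGroup_le _ (by positivity) _
  let T2 : Z → StrongDual ℝ (StrongDual ℝ X) := fun z =>
    LinearMap.mkContinuous
      { toFun := fun f => M₂ (ψ z f)
        map_add' := fun f g => by
          beta_reduce
          rw [show ψ z (f + g) = ψ z f + ψ z g from BoundedContinuousFunction.ext fun v => rfl,
            map_add]
        map_smul' := fun c f => by
          show M₂ (ψ z (c • f)) = c • M₂ (ψ z f)
          rw [show ψ z (c • f) = c • ψ z f from BoundedContinuousFunction.ext fun v => rfl,
            map_smul] }
      (KP * ‖z‖)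
      (fun f => by
        rw [Real.norm_eq_abs]
        refine le_trans (habs₂ _) (le_trans (hψnorm z f) (le_of_eq ?_))
        ring)
  have hT2apply : ∀ (z : Z) (f : StrongDual ℝ X), T2 z f = M₂ (ψ z f) := fun z f => rfl
  have hT2add : ∀ z₁ z₂ : Z, T2 (z₁ + z₂) = T2 z₁ + T2 z₂ := by
    intro z₁ z₂
    ext f
    have hfun : ψ (z₁ + z₂) f = Lind16.transl z₂ (ψ z₁ f) + ψ z₂ f := by
      ext w
      set v := Disc.un w with hv
      have lhs : ψ (z₁ + z₂) f w = f (R (z₁ + z₂ + v) - R v) := rfl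
      have rhs : (Lind16.transl z₂ (ψ z₁ f) + ψ z₂ f) w
          = f (R (z₁ + (v + z₂)) - R (v + z₂)) + f (R (z₂ + v) - R v) := rfl
      have h1 : z₁ + (v + z₂) = z₁ + z₂ + v := by abel
      have h2 : v + z₂ = z₂ + v := by abel
      rw [lhs, rhs, h1, h2, ← map_add, sub_add_sub_cancel]
    rw [ContinuousLinearMap.add_apply, hT2apply, hT2apply, hT2apply, hfun, map_add, hM₂transl]
  have hT2Y : ∀ y : ↥Y, T2 ↑y = inclusionInDoubleDual ℝ X (ι y) := by
    intro y
    ext f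
    have hfun : ψ (↑y) f = BoundedContinuousFunction.const (Disc Z) (f (ι y)) := by
      ext w
      set v := Disc.un w with hv
      have lhs : ψ (↑y) f w = f (R (↑y + v) - R v) := rfl
      have h1 : (↑y : Z) + v = v + ↑y := by abel
      rw [lhs, h1, hReq v y, add_sub_cancel_left]
      rfl
    rw [hT2apply, hfun, hM₂const, dual_def]
  have hT2bound : ∀ z : Z, ‖T2 z‖ ≤ KP * ‖z‖ := by
    intro z
    refine ContinuousLinearMap.opNorm_le_bound _ (by positivity) fun f => ?_
    rw [hT2apply, Real.norm_eq_abs]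
    refine le_trans (habs₂ _) (le_trans (hψnorm z f) (le_of_eq (by ring)))
  -- linearity of T2
  let T2hom : Z →+ StrongDual ℝ (StrongDual ℝ X) := AddMonoidHom.mk' T2 hT2add
  have hT2cont : Continuous T2 := by
    have : LipschitzWith (Real.toNNReal (KP : ℝ)) T2hom :=
      AddMonoidHomClass.lipschitz_of_bound T2hom (KP : ℝ) hT2bound
    exact this.continuous
  let T2lin : Z →L[ℝ] StrongDual ℝ (StrongDual ℝ X) := AddMonoidHom.toRealLinearMap (F := StrongDual ℝ (StrongDual ℝ X)) T2hom hT2cont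
  have hT2lin : ∀ z : Z, T2lin z = T2 z := fun z => congrFun (AddMonoidHom.coe_toRealLinearMap (F := StrongDual ℝ (StrongDual ℝ X)) T2hom hT2cont) z
  -- the projection
  let e : X →L[ℝ] ↥Y := ι.symm.toContinuousLinearEquiv.toContinuousLinearMap
  let π : Z →L[ℝ] Z := Y.subtypeL.comp (e.comp (Q.comp T2lin))
  have hπapply : ∀ z : Z, π z = ↑(ι.symm (Q (T2lin z))) := fun z => rfl
  have hπY : ∀ y : ↥Y, π ↑y = ↑y := by
    intro y
    rw [hπapply, hT2lin, hT2Y, hQ, LinearIsometryEquiv.symm_apply_apply]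
  refine ⟨π, ?_, ?_, ?_⟩
  · refine ContinuousLinearMap.opNorm_le_bound _ (by positivity) fun z => ?_
    rw [hπapply]
    calc ‖(↑(ι.symm (Q (T2lin z))) : Z)‖ = ‖ι.symm (Q (T2lin z))‖ := rfl
      _ = ‖Q (T2lin z)‖ := ι.symm.norm_map _
      _ ≤ @Norm.norm _ (ContinuousLinearMap.hasOpNorm (𝕜 := ℝ) (𝕜₂ := ℝ) (E := StrongDual ℝ (StrongDual ℝ X)) (F := X)) Q * ‖T2lin z‖ := ContinuousLinearMap.le_opNorm (𝕜 := ℝ) (𝕜₂ := ℝ) (E := StrongDual ℝ (StrongDual ℝ X)) (F := X) Q _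
      _ ≤ 1 * (KP * ‖z‖) := by
          refine mul_le_mul hQnorm ?_ (ContinuousLinearMap.opNorm_nonneg _) zero_le_one
          rw [hT2lin]; exact hT2bound z
      _ = KP * ‖z‖ := one_mul _
  · ext x
    constructor
    · rintro ⟨z, rfl⟩
      rw [hπapply]
      exact Submodule.coe_mem _
    · intro hx
      exact ⟨x, by rw [show x = ((⟨x, hx⟩ : ↥Y) : Z) from rfl, hπY]⟩
  · intro z
    have : π z = ↑(ι.symm (Q (T2lin z))) := hπapply z
    rw [this, hπY]
end

section
/- Let X be a Banach space, (xₙ*) a sequence in the closed unit ball of X* converging weak-star to x*, with ‖xₙ* − x*‖ ≥ ε for all n. Suppose there exists A > 0 and a weak-star cluster point G ∈ X*** of (xₙ* − x*) (viewed in X*** via the canonical embedding of X* ) with distance d(G, X*) ≥ Aε, and suppose X is an M-ideal in X**, i.e. ‖G + x*‖ = ‖G‖ + ‖x*‖ for all G ∈ X⊥ ⊆ X*** and x* ∈ X*. Then ‖x*‖ ≤ 1 − Aε. -/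
open Filter Topology NormedSpace

/-- For every `Φ : X**`, `G Φ` is a cluster point of `n ↦ Φ (xs n - xstar)`. -/
private lemma stmt17_eval_cluster {X : Type*} [NormedAddCommGroup X] [NormedSpace ℝ X]
    (xs : ℕ → Dual ℝ X) (xstar : Dual ℝ X)
    (G : Dual ℝ (Dual ℝ (Dual ℝ X)))
    (hcluster : MapClusterPt (StrongDual.toWeakDual G) atTop
      (fun n => StrongDual.toWeakDual (inclusionInDoubleDual ℝ (Dual ℝ X) (xs n - xstar))))
    (Φ : Dual ℝ (Dual ℝ X)) :
    MapClusterPt (G Φ) atTop (fun n => Φ (xs n - xstar)) := by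
  have hc : ContinuousAt (fun f : WeakDual ℝ (Dual ℝ (Dual ℝ X)) => f Φ)
      (StrongDual.toWeakDual G) := (WeakDual.eval_continuous Φ).continuousAt
  have := hcluster.continuousAt_comp hc
  exact this

/-- Let `(xₙ*)` be a sequence in the closed unit ball of `X*` converging weak-star to `x*`,
with `‖xₙ* − x*‖ ≥ ε`.  Suppose there exist `A > 0` and a weak-star cluster point
`G ∈ X***` of `(xₙ* − x*)` with `d(G, X*) ≥ Aε`, and suppose `X` is an M-ideal in `X**`,
i.e. `‖G + x*‖ = ‖G‖ + ‖x*‖` for all `G ∈ X⊥ ⊆ X***` and `x* ∈ X*`.  Then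
`‖x*‖ ≤ 1 − Aε`. -/
theorem stmt17 {X : Type*} [NormedAddCommGroup X] [NormedSpace ℝ X] [CompleteSpace X]
    (ε : ℝ) (hε : 0 < ε)
    (xs : ℕ → Dual ℝ X) (hball : ∀ n, ‖xs n‖ ≤ 1)
    (xstar : Dual ℝ X)
    (hwstar : ∀ x : X, Tendsto (fun n => xs n x) atTop (𝓝 (xstar x)))
    (hsep : ∀ n, ε ≤ ‖xs n - xstar‖)
    (A : ℝ) (hA : 0 < A)
    (G : Dual ℝ (Dual ℝ (Dual ℝ X)))
    (hcluster : MapClusterPt (StrongDual.toWeakDual G) atTop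
      (fun n => StrongDual.toWeakDual (inclusionInDoubleDual ℝ (Dual ℝ X) (xs n - xstar))))
    (hdist : A * ε ≤ Metric.infDist G (Set.range (inclusionInDoubleDual ℝ (Dual ℝ X))))
    (hMideal : ∀ H : Dual ℝ (Dual ℝ (Dual ℝ X)),
      (∀ x : X, H (inclusionInDoubleDual ℝ X x) = 0) →
      ∀ f : Dual ℝ X, ‖H + inclusionInDoubleDual ℝ (Dual ℝ X) f‖ = ‖H‖ + ‖f‖) :
    ‖xstar‖ ≤ 1 - A * ε := by
  -- G annihilates X
  have hG0 : ∀ x : X, G (inclusionInDoubleDual ℝ X x) = 0 := by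
    intro x
    have hcl := stmt17_eval_cluster xs xstar G hcluster (inclusionInDoubleDual ℝ X x)
    have heval : (fun n => (inclusionInDoubleDual ℝ X x) (xs n - xstar))
        = fun n => xs n x - xstar x := by
      ext n; simp
    rw [heval] at hcl
    have htend : Tendsto (fun n => xs n x - xstar x) atTop (𝓝 (0:ℝ)) := by
      have := (hwstar x).sub (tendsto_const_nhds (x := xstar x))
      simpa using this
    have hle : map (fun n => xs n x - xstar x) atTop ≤ 𝓝 (0:ℝ) := htend
    have hne : NeBot (𝓝 (G (inclusionInDoubleDual ℝ X x)) ⊓ 𝓝 (0:ℝ)) :=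
      neBot_of_le (inf_le_inf_left _ hle) (hf := hcl)
    exact eq_of_nhds_neBot hne
  -- ‖G + J x*‖ ≤ 1
  have hbound : ‖G + inclusionInDoubleDual ℝ (Dual ℝ X) xstar‖ ≤ 1 := by
    refine ContinuousLinearMap.opNorm_le_bound _ zero_le_one ?_
    intro Φ
    have hcl := stmt17_eval_cluster xs xstar G hcluster Φ
    have hcl' : MapClusterPt (G Φ + Φ xstar) atTop (fun n => Φ (xs n)) := by
      have hc : ContinuousAt (fun t : ℝ => t + Φ xstar) (G Φ) := by fun_prop
      have h2 := hcl.continuousAt_comp hc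
      have heq : ((fun t : ℝ => t + Φ xstar) ∘ fun n => Φ (xs n - xstar)) = fun n => Φ (xs n) := by
        ext n; simp [Function.comp, map_sub]
      rwa [heq] at h2
    have hle : map (fun n => Φ (xs n)) atTop ≤ Filter.principal (Set.Icc (-‖Φ‖) ‖Φ‖) := by
      refine Filter.le_principal_iff.mpr (Filter.mem_map.mpr
        (Filter.Eventually.of_forall fun n => ?_))
      have h1 : |Φ (xs n)| ≤ ‖Φ‖ := by
        calc |Φ (xs n)| = ‖Φ (xs n)‖ := rfl
          _ ≤ ‖Φ‖ * ‖xs n‖ := Φ.le_opNorm _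
          _ ≤ ‖Φ‖ * 1 := by
              have h0 : (0:ℝ) ≤ ‖Φ‖ := norm_nonneg _
              have := hball n
              nlinarith
          _ = ‖Φ‖ := mul_one _
      exact ⟨(abs_le.mp h1).1, (abs_le.mp h1).2⟩
    have hmem : G Φ + Φ xstar ∈ closure (Set.Icc (-‖Φ‖) ‖Φ‖) :=
      mem_closure_iff_clusterPt.mpr (hcl'.clusterPt.mono hle)
    rw [IsClosed.closure_eq isClosed_Icc] at hmem
    have habs : |G Φ + Φ xstar| ≤ ‖Φ‖ := abs_le.mpr ⟨hmem.1, hmem.2⟩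
    calc ‖(G + inclusionInDoubleDual ℝ (Dual ℝ X) xstar) Φ‖
        = |G Φ + Φ xstar| := by simp
      _ ≤ ‖Φ‖ := habs
      _ = 1 * ‖Φ‖ := (one_mul _).symm
  -- A ε ≤ ‖G‖
  have hGnorm : A * ε ≤ ‖G‖ := by
    refine hdist.trans ?_
    have h0mem : (0 : Dual ℝ (Dual ℝ (Dual ℝ X))) ∈
        Set.range (inclusionInDoubleDual ℝ (Dual ℝ X)) := ⟨0, map_zero _⟩
    have := Metric.infDist_le_dist_of_mem h0mem (x := G)
    simpa [dist_zero_right] using this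
  have hM := hMideal G hG0 xstar
  have hsum : ‖G‖ + ‖xstar‖ ≤ 1 := hM ▸ hbound
  linarith
end
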